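/- arXiv:0903.3673 — 4 statements merged into one kernel-verified Lean document; each statement's English description precedes it below -/
import Mathlib

section
/- For any discrete abelian group G (possibly with torsion), the asymmetrization of every n-cocycle c ∈ Z^n(G,T) is an asymmetric multicharacter of G. -/
/-- Asymmetrization of an `n`-cochain with values in `T = ℝ/ℤ`:
`(AS c)(g₁,...,gₙ) = Σ_{σ ∈ Sym(n)} sign(σ) • c(g_{σ(1)},...,g_{σ(n)})`
(written additively in `T`). -/
noncomputable def asymmetrization {Q : Type*} [AddCommGroup Q] (n : ℕ)
    (c : (Fin n → Q) → AddCircle (1 : ℝ)) : (Fin n → Q) → AddCircle (1 : ℝ) :=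
  fun g => ∑ σ : Equiv.Perm (Fin n), (Equiv.Perm.sign σ : ℤ) • c (g ∘ σ)

/-- The inhomogeneous coboundary `∂ : C^n(Q,T) → C^{n+1}(Q,T)` (trivial action,
`Q` written additively, `T = ℝ/ℤ`). -/
noncomputable def coboundary {Q : Type*} [AddCommGroup Q] (n : ℕ)
    (ξ : (Fin n → Q) → AddCircle (1 : ℝ)) : (Fin (n + 1) → Q) → AddCircle (1 : ℝ) :=
  fun g =>
    ξ (fun i => g i.succ)
      + ∑ k : Fin n, ((-1 : ℤ) ^ ((k : ℕ) + 1)) •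
          ξ (fun i =>
            if (i : ℕ) < (k : ℕ) then g i.castSucc
            else if (i : ℕ) = (k : ℕ) then g i.castSucc + g i.succ
            else g i.succ)
      + ((-1 : ℤ) ^ (n + 1)) • ξ (fun i => g i.castSucc)


open Equiv Equiv.Perm Finset

namespace Stmt8Aux

private lemma sign_sq {α : Type*} [DecidableEq α] [Fintype α] (σ : Perm α) :
    (Perm.sign σ : ℤ) * (Perm.sign σ : ℤ) = 1 := by
  have h := Int.units_mul_self (Perm.sign σ)
  calc (Perm.sign σ : ℤ) * (Perm.sign σ : ℤ) = ((Perm.sign σ * Perm.sign σ : ℤˣ) : ℤ) := by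
        push_cast; ring
    _ = ((1 : ℤˣ) : ℤ) := by rw [h]
    _ = 1 := rfl

private lemma as_perm {G : Type*} [AddCommGroup G] (n : ℕ)
    (c : (Fin n → G) → AddCircle (1 : ℝ)) (g : Fin n → G) (σ : Perm (Fin n)) :
    asymmetrization n c (g ∘ σ) = (Perm.sign σ : ℤ) • asymmetrization n c g := by
  unfold asymmetrization
  rw [smul_sum]
  refine Fintype.sum_equiv (Equiv.mulLeft σ) _ _ (fun τ => ?_)
  have h1 : (g ∘ ⇑σ) ∘ ⇑τ = g ∘ ⇑(σ * τ) := by rw [Perm.coe_mul]; rfl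
  have h2 : ((Perm.sign (σ * τ) : ℤ)) = (Perm.sign σ : ℤ) * (Perm.sign τ : ℤ) := by
    rw [map_mul]; push_cast; ring
  simp only [Equiv.coe_mulLeft, h1, h2, smul_smul]
  congr 1
  rw [← mul_assoc, sign_sq, one_mul]

variable {G : Type*} [AddCommGroup G]

private lemma decomposeFin_fst {m : ℕ} (σ : Perm (Fin (m + 1))) :
    (decomposeFin σ).1 = σ 0 := by
  calc (decomposeFin σ).1
      = decomposeFin.symm ((decomposeFin σ).1, (decomposeFin σ).2) 0 :=
        (decomposeFin_symm_apply_zero _ _).symm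
    _ = decomposeFin.symm (decomposeFin σ) 0 := by rw [Prod.mk.eta]
    _ = σ 0 := by rw [Equiv.symm_apply_apply]

private lemma decomposeFin_recon {m : ℕ} (σ : Perm (Fin (m + 1))) :
    decomposeFin.symm (σ 0, (decomposeFin σ).2) = σ := by
  rw [← decomposeFin_fst, Prod.mk.eta, Equiv.symm_apply_apply]

/-- Summation over the permutations with a prescribed value at `0`. -/
private lemma sum_fixed_zero {m : ℕ} {M : Type*} [AddCommMonoid M]
    (v : Fin (m + 2)) (Φ : Perm (Fin (m + 2)) → M) :
    ∑ σ ∈ univ.filter (fun σ : Perm (Fin (m + 2)) => σ 0 = v), Φ σ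
      = ∑ τ : Perm (Fin (m + 1)), Φ (decomposeFin.symm (v, τ)) := by
  classical
  refine Finset.sum_nbij' (fun σ => (decomposeFin σ).2)
    (fun τ => decomposeFin.symm (v, τ)) ?_ ?_ ?_ ?_ ?_
  · intro σ hσ; exact Finset.mem_univ _
  · intro τ _
    simp only [Finset.mem_filter, Finset.mem_univ, true_and, decomposeFin_symm_apply_zero]
  · intro σ hσ
    rw [Finset.mem_filter] at hσ
    show decomposeFin.symm (v, (decomposeFin σ).2) = σ
    rw [← hσ.2]
    exact decomposeFin_recon σ
  · intro τ _
    show (decomposeFin (decomposeFin.symm (v, τ))).2 = τ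
    rw [Equiv.apply_symm_apply]
  · intro σ hσ
    rw [Finset.mem_filter] at hσ
    show Φ σ = Φ (decomposeFin.symm (v, (decomposeFin σ).2))
    rw [← hσ.2]
    rw [decomposeFin_recon σ]

private lemma add_zero_case {m : ℕ} (c : (Fin (m + 1) → G) → AddCircle (1 : ℝ))
    (hc : coboundary (m + 1) c = 0) (g : Fin (m + 1) → G) (x y : G) :
    asymmetrization (m + 1) c (Function.update g 0 (x + y)) =
      asymmetrization (m + 1) c (Function.update g 0 x) +
        asymmetrization (m + 1) c (Function.update g 0 y) := by
  classical
  set f : Fin (m + 2) → G := Fin.cons x (Fin.cons y (Fin.tail g)) with hfdef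
  have hf0 : f 0 = x := by simp [hfdef]
  have hf1 : f 1 = y := by
    rw [← Fin.succ_zero_eq_one]
    simp [hfdef]
  have hfs : ∀ j : Fin (m + 1), j ≠ 0 → f j.succ = g j := by
    intro j hj
    induction j using Fin.cases with
    | zero => exact absurd rfl hj
    | succ t => simp [hfdef, Fin.tail]
  have hfy : (fun j : Fin (m + 1) => f j.succ) = Function.update g 0 y := by
    funext j
    by_cases hj : j = 0
    · subst hj
      rw [Fin.succ_zero_eq_one, hf1, Function.update_self]
    · rw [hfs j hj, Function.update_of_ne hj]
  have hfx : (fun j : Fin (m + 1) => f (Equiv.swap (0 : Fin (m + 2)) 1 j.succ))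
      = Function.update g 0 x := by
    funext j
    by_cases hj : j = 0
    · subst hj
      rw [Fin.succ_zero_eq_one, Equiv.swap_apply_right, hf0, Function.update_self]
    · have h1 : (j.succ : Fin (m + 2)) ≠ 0 := Fin.succ_ne_zero j
      have h2 : (j.succ : Fin (m + 2)) ≠ 1 := by
        rw [← Fin.succ_zero_eq_one]
        exact fun h => hj (Fin.succ_injective _ h)
      rw [Equiv.swap_apply_of_ne_of_ne h1 h2, hfs j hj, Function.update_of_ne hj]
  -- the rotation
  set ρ : Perm (Fin (m + 2)) := finRotate (m + 2) with hρdef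
  have hρinv : ∀ u : Fin (m + 2),
      ((ρ⁻¹ u : ℕ) = m + 1 ∧ (u : ℕ) = 0) ∨ ((ρ⁻¹ u : ℕ) + 1 = (u : ℕ) ∧ (u : ℕ) ≠ 0) := by
    intro u
    have hu : ρ⁻¹ u + 1 = u := by
      have h := Equiv.apply_symm_apply ρ u
      rwa [hρdef, finRotate_succ_apply] at h
    by_cases hv : ρ⁻¹ u = Fin.last (m + 1)
    · left
      constructor
      · rw [hv]; rfl
      · rw [← hu]
        have := Fin.val_add_one (ρ⁻¹ u)
        rw [this, if_pos hv]
    · right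
      have hval : ((ρ⁻¹ u + 1 : Fin (m + 2)) : ℕ) = (ρ⁻¹ u : ℕ) + 1 := by
        rw [Fin.val_add_one, if_neg hv]
      have hval2 : (u : ℕ) = (ρ⁻¹ u : ℕ) + 1 := by rw [← hval, hu]
      exact ⟨hval2.symm, by omega⟩
  -- order-condition analysis
  have hq12 : ∀ σ : Perm (Fin (m + 2)),
      ((σ⁻¹ 0 < σ⁻¹ 1 ∧ ¬ ((σ * ρ)⁻¹ 0 < (σ * ρ)⁻¹ 1)) ↔ σ 0 = 0)
      ∧ (((σ * ρ)⁻¹ 0 < (σ * ρ)⁻¹ 1 ∧ ¬ (σ⁻¹ 0 < σ⁻¹ 1)) ↔ σ 0 = 1) := by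
    intro σ
    have hco : ∀ v, (σ * ρ)⁻¹ v = ρ⁻¹ (σ⁻¹ v) := by
      intro v; rw [mul_inv_rev]; rfl
    have hab : σ⁻¹ 0 ≠ σ⁻¹ 1 := by
      intro h
      have h2 : (0 : Fin (m + 2)) = 1 := σ⁻¹.injective h
      simp at h2
    have hab' : ((σ⁻¹ 0 : Fin (m + 2)) : ℕ) ≠ ((σ⁻¹ 1 : Fin (m + 2)) : ℕ) :=
      fun h => hab (Fin.ext h)
    have e0 : (σ 0 = 0) ↔ ((σ⁻¹ (0 : Fin (m + 2)) : Fin (m + 2)) : ℕ) = 0 := by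
      constructor
      · intro h
        have : σ⁻¹ (0 : Fin (m + 2)) = 0 := by
          rw [Perm.inv_eq_iff_eq, h]
        rw [this]; rfl
      · intro h
        have h2 : σ⁻¹ (0 : Fin (m + 2)) = 0 := Fin.ext (by rw [h]; rfl)
        rw [Perm.inv_eq_iff_eq] at h2
        exact h2.symm
    have e1 : (σ 0 = 1) ↔ ((σ⁻¹ (1 : Fin (m + 2)) : Fin (m + 2)) : ℕ) = 0 := by
      constructor
      · intro h
        have : σ⁻¹ (1 : Fin (m + 2)) = 0 := by
          rw [Perm.inv_eq_iff_eq, h]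
        rw [this]; rfl
      · intro h
        have h2 : σ⁻¹ (1 : Fin (m + 2)) = 0 := Fin.ext (by rw [h]; rfl)
        rw [Perm.inv_eq_iff_eq] at h2
        exact h2.symm
    have hA := hρinv (σ⁻¹ 0)
    have hB := hρinv (σ⁻¹ 1)
    have hlt0 := (σ⁻¹ (0 : Fin (m + 2))).isLt
    have hlt1 := (σ⁻¹ (1 : Fin (m + 2))).isLt
    simp only [hco, Fin.lt_def, e0, e1]
    omega
  -- the main sum
  set Pq : Finset (Perm (Fin (m + 2))) :=
    univ.filter (fun σ : Perm (Fin (m + 2)) => σ⁻¹ 0 < σ⁻¹ 1) with hPqdef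
  have hzero : ∑ σ ∈ Pq, (Perm.sign σ : ℤ) • coboundary (m + 1) c (f ∘ ⇑σ) = 0 := by
    apply Finset.sum_eq_zero
    intro σ _
    rw [hc]
    simp
  have hexp : ∑ σ ∈ Pq, (Perm.sign σ : ℤ) • coboundary (m + 1) c (f ∘ ⇑σ)
      = (∑ σ ∈ Pq, (Perm.sign σ : ℤ) • c (fun i => f (σ i.succ)))
        + (∑ σ ∈ Pq, ∑ k : Fin (m + 1), ((Perm.sign σ : ℤ) * (-1 : ℤ) ^ ((k : ℕ) + 1)) •
            c (fun i => if (i : ℕ) < (k : ℕ) then f (σ i.castSucc)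
                else if (i : ℕ) = (k : ℕ) then f (σ i.castSucc) + f (σ i.succ)
                else f (σ i.succ)))
        + (∑ σ ∈ Pq, ((Perm.sign σ : ℤ) * (-1 : ℤ) ^ (m + 1 + 1)) •
            c (fun i => f (σ i.castSucc))) := by
    rw [← Finset.sum_add_distrib, ← Finset.sum_add_distrib]
    refine Finset.sum_congr rfl fun σ _ => ?_
    simp only [coboundary, Function.comp_apply, smul_add, Finset.smul_sum, smul_smul]
  have hI : (∑ σ ∈ Pq, (Perm.sign σ : ℤ) • c (fun i => f (σ i.succ)))
        + (∑ σ ∈ Pq, ((Perm.sign σ : ℤ) * (-1 : ℤ) ^ (m + 1 + 1)) •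
            c (fun i => f (σ i.castSucc)))
      = asymmetrization (m + 1) c (Function.update g 0 y)
        + asymmetrization (m + 1) c (Function.update g 0 x) := by
    -- reindex the third sum by right-multiplication with ρ⁻¹
    have hT3 : (∑ σ ∈ Pq, ((Perm.sign σ : ℤ) * (-1 : ℤ) ^ (m + 1 + 1)) •
            c (fun i => f (σ i.castSucc)))
        = ∑ σ ∈ univ.filter (fun σ : Perm (Fin (m + 2)) => (σ * ρ)⁻¹ 0 < (σ * ρ)⁻¹ 1),
            (-(Perm.sign σ : ℤ)) • c (fun i => f (σ i.succ)) := by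
      refine Finset.sum_equiv (Equiv.mulRight ρ⁻¹) ?_ ?_
      · intro σ
        simp only [hPqdef, Finset.mem_filter, Finset.mem_univ, true_and, Equiv.coe_mulRight]
        rw [inv_mul_cancel_right]
      · intro σ hσ
        simp only [Equiv.coe_mulRight]
        have harg : (fun i : Fin (m + 1) => f ((σ * ρ⁻¹) i.succ))
            = (fun i : Fin (m + 1) => f (σ i.castSucc)) := by
          funext i
          have h1 : ρ i.castSucc = i.succ := by
            rw [hρdef, finRotate_succ_apply, Fin.coeSucc_eq_succ]
          have h2 : ρ⁻¹ i.succ = i.castSucc := by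
            rw [Perm.inv_eq_iff_eq, h1]
          rw [Perm.mul_apply, h2]
        rw [harg]
        congr 1
        have hsgn : (Perm.sign (σ * ρ⁻¹) : ℤ) = (Perm.sign σ : ℤ) * (-1 : ℤ) ^ (m + 1) := by
          have h1 : Perm.sign (σ * ρ⁻¹) = Perm.sign σ * ((-1 : ℤˣ)) ^ (m + 1) := by
            rw [map_mul, map_inv, hρdef, sign_finRotate, ← inv_pow]
            norm_num
          rw [h1]
          push_cast
          ring
        rw [hsgn]
        ring
    rw [hT3]
    have hneg : ∑ σ ∈ univ.filter (fun σ : Perm (Fin (m + 2)) => (σ * ρ)⁻¹ 0 < (σ * ρ)⁻¹ 1),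
            (-(Perm.sign σ : ℤ)) • c (fun i => f (σ i.succ))
        = - ∑ σ ∈ univ.filter (fun σ : Perm (Fin (m + 2)) => (σ * ρ)⁻¹ 0 < (σ * ρ)⁻¹ 1),
            (Perm.sign σ : ℤ) • c (fun i => f (σ i.succ)) := by
      rw [← Finset.sum_neg_distrib]
      exact Finset.sum_congr rfl fun σ _ => by rw [neg_smul]
    rw [hneg]
    -- split both sums by the other condition
    rw [hPqdef]
    rw [← Finset.sum_filter_add_sum_filter_not
      (univ.filter (fun σ : Perm (Fin (m + 2)) => σ⁻¹ 0 < σ⁻¹ 1))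
      (fun σ : Perm (Fin (m + 2)) => (σ * ρ)⁻¹ 0 < (σ * ρ)⁻¹ 1)
      (fun σ => (Perm.sign σ : ℤ) • c (fun i => f (σ i.succ)))]
    rw [← Finset.sum_filter_add_sum_filter_not
      (univ.filter (fun σ : Perm (Fin (m + 2)) => (σ * ρ)⁻¹ 0 < (σ * ρ)⁻¹ 1))
      (fun σ : Perm (Fin (m + 2)) => σ⁻¹ 0 < σ⁻¹ 1)
      (fun σ => (Perm.sign σ : ℤ) • c (fun i => f (σ i.succ)))]
    rw [Finset.filter_comm]
    -- identify the two difference sets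
    have hset1 : (univ.filter (fun σ : Perm (Fin (m + 2)) => σ⁻¹ 0 < σ⁻¹ 1)).filter
          (fun σ : Perm (Fin (m + 2)) => ¬ ((σ * ρ)⁻¹ 0 < (σ * ρ)⁻¹ 1))
        = univ.filter (fun σ : Perm (Fin (m + 2)) => σ 0 = 0) := by
      ext σ
      simp only [Finset.mem_filter, Finset.mem_univ, true_and, and_assoc]
      exact (hq12 σ).1
    have hset2 : (univ.filter (fun σ : Perm (Fin (m + 2)) => (σ * ρ)⁻¹ 0 < (σ * ρ)⁻¹ 1)).filter
          (fun σ : Perm (Fin (m + 2)) => ¬ (σ⁻¹ 0 < σ⁻¹ 1))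
        = univ.filter (fun σ : Perm (Fin (m + 2)) => σ 0 = 1) := by
      ext σ
      simp only [Finset.mem_filter, Finset.mem_univ, true_and, and_assoc]
      exact (hq12 σ).2
    rw [hset1, hset2]
    -- evaluate the two fixed-value sums
    have hA0 : ∑ σ ∈ univ.filter (fun σ : Perm (Fin (m + 2)) => σ 0 = 0),
          (Perm.sign σ : ℤ) • c (fun i => f (σ i.succ))
        = asymmetrization (m + 1) c (Function.update g 0 y) := by
      rw [sum_fixed_zero (0 : Fin (m + 2))
        (fun σ => (Perm.sign σ : ℤ) • c (fun i => f (σ i.succ)))]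
      unfold asymmetrization
      refine Finset.sum_congr rfl fun τ _ => ?_
      have hsgn : Perm.sign (decomposeFin.symm ((0 : Fin (m + 2)), τ)) = Perm.sign τ := by
        rw [Equiv.Perm.decomposeFin.symm_sign, if_pos rfl, one_mul]
      have harg : (fun i : Fin (m + 1) => f (decomposeFin.symm ((0 : Fin (m + 2)), τ) i.succ))
          = Function.update g 0 y ∘ ⇑τ := by
        funext i
        rw [decomposeFin_symm_apply_succ, Equiv.swap_self]
        show f ((τ i).succ) = Function.update g 0 y (τ i)
        exact congrFun hfy (τ i)
      rw [hsgn, harg]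
    have hA1 : ∑ σ ∈ univ.filter (fun σ : Perm (Fin (m + 2)) => σ 0 = 1),
          (Perm.sign σ : ℤ) • c (fun i => f (σ i.succ))
        = - asymmetrization (m + 1) c (Function.update g 0 x) := by
      rw [sum_fixed_zero (1 : Fin (m + 2))
        (fun σ => (Perm.sign σ : ℤ) • c (fun i => f (σ i.succ)))]
      unfold asymmetrization
      rw [← Finset.sum_neg_distrib]
      refine Finset.sum_congr rfl fun τ _ => ?_
      have h10 : (1 : Fin (m + 2)) ≠ 0 := by
        simp [Fin.ext_iff]
      have hsgn : (Perm.sign (decomposeFin.symm ((1 : Fin (m + 2)), τ)) : ℤ)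
          = -(Perm.sign τ : ℤ) := by
        rw [Equiv.Perm.decomposeFin.symm_sign, if_neg h10]
        push_cast
        ring
      have harg : (fun i : Fin (m + 1) => f (decomposeFin.symm ((1 : Fin (m + 2)), τ) i.succ))
          = Function.update g 0 x ∘ ⇑τ := by
        funext i
        rw [decomposeFin_symm_apply_succ]
        show f (Equiv.swap (0 : Fin (m + 2)) 1 ((τ i).succ)) = Function.update g 0 x (τ i)
        exact congrFun hfx (τ i)
      rw [hsgn, harg, neg_smul]
    rw [hA0, hA1]
    abel
  have hII : (∑ σ ∈ Pq, ∑ k : Fin (m + 1), ((Perm.sign σ : ℤ) * (-1 : ℤ) ^ ((k : ℕ) + 1)) •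
            c (fun i => if (i : ℕ) < (k : ℕ) then f (σ i.castSucc)
                else if (i : ℕ) = (k : ℕ) then f (σ i.castSucc) + f (σ i.succ)
                else f (σ i.succ)))
      = - asymmetrization (m + 1) c (Function.update g 0 (x + y)) := by
    rw [Finset.sum_comm]
    have hk : ∀ k : Fin (m + 1),
        (∑ σ ∈ Pq, ((Perm.sign σ : ℤ) * (-1 : ℤ) ^ ((k : ℕ) + 1)) •
            c (fun i => if (i : ℕ) < (k : ℕ) then f (σ i.castSucc)
                else if (i : ℕ) = (k : ℕ) then f (σ i.castSucc) + f (σ i.succ)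
                else f (σ i.succ)))
          = ∑ τ ∈ univ.filter (fun τ : Perm (Fin (m + 1)) => τ k = 0),
              (-(Perm.sign τ : ℤ)) • c (Function.update g 0 (x + y) ∘ ⇑τ) := by
      intro k
      set s : Perm (Fin (m + 2)) := Equiv.swap k.castSucc k.succ with hsdef
      have hcs : k.castSucc ≠ k.succ := (Fin.castSucc_lt_succ (i := k)).ne
      have hcancel : ∀ σ : Perm (Fin (m + 2)),
          ((Perm.sign (σ * s) : ℤ) * (-1 : ℤ) ^ ((k : ℕ) + 1))
            = -((Perm.sign σ : ℤ) * (-1 : ℤ) ^ ((k : ℕ) + 1)) := by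
        intro σ
        have h1 : Perm.sign (σ * s) = - Perm.sign σ := by
          rw [map_mul, hsdef, Perm.sign_swap hcs, mul_neg, mul_one]
        rw [h1]
        push_cast
        ring
      have hargeq : ∀ σ : Perm (Fin (m + 2)),
          (fun i : Fin (m + 1) => if (i : ℕ) < (k : ℕ) then f ((σ * s) i.castSucc)
              else if (i : ℕ) = (k : ℕ) then f ((σ * s) i.castSucc) + f ((σ * s) i.succ)
              else f ((σ * s) i.succ))
          = (fun i : Fin (m + 1) => if (i : ℕ) < (k : ℕ) then f (σ i.castSucc)
              else if (i : ℕ) = (k : ℕ) then f (σ i.castSucc) + f (σ i.succ)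
              else f (σ i.succ)) := by
        intro σ
        funext i
        split_ifs with h1 h2
        · have e1 : i.castSucc ≠ k.castSucc := by
            simp only [ne_eq, Fin.ext_iff, Fin.coe_castSucc]; omega
          have e2 : i.castSucc ≠ k.succ := by
            simp only [ne_eq, Fin.ext_iff, Fin.coe_castSucc, Fin.val_succ]; omega
          rw [Perm.mul_apply, hsdef, Equiv.swap_apply_of_ne_of_ne e1 e2]
        · obtain rfl : i = k := Fin.ext h2
          rw [Perm.mul_apply, Perm.mul_apply, hsdef, Equiv.swap_apply_left,
            Equiv.swap_apply_right]
          exact add_comm _ _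
        · have e1 : i.succ ≠ k.castSucc := by
            simp only [ne_eq, Fin.ext_iff, Fin.coe_castSucc, Fin.val_succ]; omega
          have e2 : i.succ ≠ k.succ := by
            simp only [ne_eq, Fin.ext_iff, Fin.val_succ]; omega
          rw [Perm.mul_apply, hsdef, Equiv.swap_apply_of_ne_of_ne e1 e2]
      rw [← Finset.sum_filter_add_sum_filter_not Pq
        (fun σ : Perm (Fin (m + 2)) => σ k.castSucc = 0 ∧ σ k.succ = 1)]
      have hrest : ∑ σ ∈ Pq.filter
            (fun σ : Perm (Fin (m + 2)) => ¬ (σ k.castSucc = 0 ∧ σ k.succ = 1)),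
          ((Perm.sign σ : ℤ) * (-1 : ℤ) ^ ((k : ℕ) + 1)) •
            c (fun i => if (i : ℕ) < (k : ℕ) then f (σ i.castSucc)
                else if (i : ℕ) = (k : ℕ) then f (σ i.castSucc) + f (σ i.succ)
                else f (σ i.succ)) = 0 := by
        refine Finset.sum_involution (fun σ _ => σ * s) ?_ ?_ ?_ ?_
        · intro σ hσ
          rw [hargeq σ, hcancel σ, neg_smul]
          exact add_neg_cancel _
        · intro σ hσ hfne heq
          have h1 : s = 1 := mul_eq_left.mp heq
          have h3 : s k.castSucc = k.castSucc := by rw [h1]; rfl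
          rw [hsdef, Equiv.swap_apply_left] at h3
          exact hcs h3.symm
        · intro σ hσ
          simp only [Finset.mem_filter, hPqdef, Finset.mem_univ, true_and] at hσ ⊢
          obtain ⟨hq, hnsp⟩ := hσ
          have hnsp' : ¬ (σ⁻¹ 0 = k.castSucc ∧ σ⁻¹ 1 = k.succ) := by
            rintro ⟨u1, u2⟩
            apply hnsp
            constructor
            · rw [← u1, ← Perm.mul_apply, mul_inv_cancel, Perm.one_apply]
            · rw [← u2, ← Perm.mul_apply, mul_inv_cancel, Perm.one_apply]
          have hsval : ∀ u : Fin (m + 2), ((s u : ℕ))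
              = if (u : ℕ) = (k : ℕ) then (k : ℕ) + 1
                else if (u : ℕ) = (k : ℕ) + 1 then (k : ℕ) else (u : ℕ) := by
            intro u
            by_cases h1 : u = k.castSucc
            · rw [h1, hsdef, Equiv.swap_apply_left,
                if_pos (by rw [Fin.coe_castSucc]), Fin.val_succ]
            · by_cases h2 : u = k.succ
              · rw [h2, hsdef, Equiv.swap_apply_right]
                rw [if_neg (by rw [Fin.val_succ]; omega), if_pos (by rw [Fin.val_succ])]
                rw [Fin.coe_castSucc]
              · rw [hsdef, Equiv.swap_apply_of_ne_of_ne h1 h2]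
                rw [if_neg (fun h => h1 (Fin.ext (by rw [h, Fin.coe_castSucc]))),
                  if_neg (fun h => h2 (Fin.ext (by rw [h, Fin.val_succ])))]
          have hinv : ∀ v : Fin (m + 2), (σ * s)⁻¹ v = s (σ⁻¹ v) := by
            intro v
            rw [mul_inv_rev, Perm.mul_apply, hsdef, Equiv.swap_inv]
          constructor
          · rw [hinv 0, hinv 1, Fin.lt_def, hsval (σ⁻¹ 0), hsval (σ⁻¹ 1)]
            rw [Fin.lt_def] at hq
            have hn1 : ¬ ((σ⁻¹ (0 : Fin (m + 2)) : ℕ) = (k : ℕ)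
                ∧ (σ⁻¹ (1 : Fin (m + 2)) : ℕ) = (k : ℕ) + 1) := by
              rintro ⟨w1, w2⟩
              exact hnsp' ⟨Fin.ext (by rw [w1, Fin.coe_castSucc]),
                Fin.ext (by rw [w2, Fin.val_succ])⟩
            have hb1 := (σ⁻¹ (0 : Fin (m + 2))).isLt
            have hb2 := (σ⁻¹ (1 : Fin (m + 2))).isLt
            have hbk := k.isLt
            split_ifs <;> omega
          · rintro ⟨h0, h1⟩
            rw [Perm.mul_apply, hsdef, Equiv.swap_apply_left] at h0
            rw [Perm.mul_apply, hsdef, Equiv.swap_apply_right] at h1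
            have ha : σ⁻¹ 0 = k.succ := by rw [Perm.inv_eq_iff_eq, h0]
            have hb : σ⁻¹ 1 = k.castSucc := by rw [Perm.inv_eq_iff_eq, h1]
            rw [ha, hb] at hq
            exact absurd hq (not_lt.mpr (Fin.castSucc_lt_succ (i := k)).le)
        · intro σ hσ
          show σ * s * s = σ
          rw [mul_assoc, hsdef, Equiv.swap_mul_self, mul_one]
      rw [hrest, add_zero]
      have hsub : Pq.filter (fun σ : Perm (Fin (m + 2)) => σ k.castSucc = 0 ∧ σ k.succ = 1)
          = univ.filter (fun σ : Perm (Fin (m + 2)) => σ k.castSucc = 0 ∧ σ k.succ = 1) := by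
        ext σ
        simp only [Finset.mem_filter, hPqdef, Finset.mem_univ, true_and, and_iff_right_iff_imp]
        rintro ⟨h0, h1⟩
        have ha : σ⁻¹ 0 = k.castSucc := by rw [Perm.inv_eq_iff_eq, h0]
        have hb : σ⁻¹ 1 = k.succ := by rw [Perm.inv_eq_iff_eq, h1]
        rw [ha, hb]
        exact Fin.castSucc_lt_succ (i := k)
      rw [hsub]
      -- bijection with permutations sending k to 0
      set W : Perm (Fin (m + 2)) := Fin.cycleRange k.castSucc with hWdef
      have hW0 : W k.castSucc = 0 := Fin.cycleRange_self _
      have hWsucc : W k.succ = k.succ := Fin.cycleRange_of_gt (Fin.castSucc_lt_succ (i := k))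
      have hWlt : ∀ i : Fin (m + 1), (i : ℕ) < (k : ℕ) → W i.castSucc = i.succ := by
        intro i h
        rw [hWdef, Fin.cycleRange_of_lt
          (Fin.castSucc_lt_castSucc_iff.mpr (Fin.lt_def.mpr h)), Fin.coeSucc_eq_succ]
      have hWgt : ∀ i : Fin (m + 1), (k : ℕ) < (i : ℕ) → W i.succ = i.succ := by
        intro i h
        rw [hWdef, Fin.cycleRange_of_gt
          (Fin.lt_def.mpr (by rw [Fin.coe_castSucc, Fin.val_succ]; omega))]
      have hWinv0 : W⁻¹ 0 = k.castSucc := by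
        rw [Perm.inv_eq_iff_eq]; exact hW0.symm
      have hWinvsucc : W⁻¹ k.succ = k.succ := by
        rw [Perm.inv_eq_iff_eq]; exact hWsucc.symm
      have hsgnW : (Perm.sign W : ℤ) = (-1 : ℤ) ^ (k : ℕ) := by
        have h1 := Fin.sign_cycleRange k.castSucc
        rw [hWdef, h1]
        push_cast
        rw [Fin.coe_castSucc]
      have hval : ∀ τ : Perm (Fin (m + 1)), τ k = 0 →
          ((Perm.sign (decomposeFin.symm ((0 : Fin (m + 2)), τ) * W) : ℤ)
              * (-1 : ℤ) ^ ((k : ℕ) + 1)) •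
            c (fun i => if (i : ℕ) < (k : ℕ)
                then f ((decomposeFin.symm ((0 : Fin (m + 2)), τ) * W) i.castSucc)
                else if (i : ℕ) = (k : ℕ)
                then f ((decomposeFin.symm ((0 : Fin (m + 2)), τ) * W) i.castSucc)
                  + f ((decomposeFin.symm ((0 : Fin (m + 2)), τ) * W) i.succ)
                else f ((decomposeFin.symm ((0 : Fin (m + 2)), τ) * W) i.succ))
          = (-(Perm.sign τ : ℤ)) • c (Function.update g 0 (x + y) ∘ ⇑τ) := by
        intro τ hτ
        have hsgnE : (Perm.sign (decomposeFin.symm ((0 : Fin (m + 2)), τ)) : ℤ)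
            = (Perm.sign τ : ℤ) := by
          rw [Equiv.Perm.decomposeFin.symm_sign, if_pos rfl, one_mul]
        have hsgn : (Perm.sign (decomposeFin.symm ((0 : Fin (m + 2)), τ) * W) : ℤ)
            = (Perm.sign τ : ℤ) * (-1 : ℤ) ^ (k : ℕ) := by
          rw [map_mul]
          push_cast
          rw [hsgnE, hsgnW]
        have hcoef : (Perm.sign (decomposeFin.symm ((0 : Fin (m + 2)), τ) * W) : ℤ)
              * (-1 : ℤ) ^ ((k : ℕ) + 1) = -(Perm.sign τ : ℤ) := by
          rw [hsgn]
          have h2 : ((-1 : ℤ)) ^ (k : ℕ) * ((-1 : ℤ)) ^ ((k : ℕ) + 1) = -1 := by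
            rw [← pow_add, show (k : ℕ) + ((k : ℕ) + 1) = 2 * (k : ℕ) + 1 from by omega,
              pow_succ, pow_mul]
            norm_num
          calc (Perm.sign τ : ℤ) * (-1 : ℤ) ^ (k : ℕ) * (-1 : ℤ) ^ ((k : ℕ) + 1)
              = (Perm.sign τ : ℤ) * ((-1 : ℤ) ^ (k : ℕ) * (-1 : ℤ) ^ ((k : ℕ) + 1)) := by ring
            _ = -(Perm.sign τ : ℤ) := by rw [h2]; ring
        have harg : (fun i : Fin (m + 1) => if (i : ℕ) < (k : ℕ)
                then f ((decomposeFin.symm ((0 : Fin (m + 2)), τ) * W) i.castSucc)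
                else if (i : ℕ) = (k : ℕ)
                then f ((decomposeFin.symm ((0 : Fin (m + 2)), τ) * W) i.castSucc)
                  + f ((decomposeFin.symm ((0 : Fin (m + 2)), τ) * W) i.succ)
                else f ((decomposeFin.symm ((0 : Fin (m + 2)), τ) * W) i.succ))
            = Function.update g 0 (x + y) ∘ ⇑τ := by
          funext i
          have hne : ∀ i' : Fin (m + 1), i' ≠ k → τ i' ≠ 0 := by
            intro i' hik h
            exact hik (τ.injective (h.trans hτ.symm))
          show _ = Function.update g 0 (x + y) (τ i)
          split_ifs with h1 h2
          · have hik : i ≠ k := fun h => by rw [h] at h1; omega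
            rw [Perm.mul_apply, hWlt i h1, decomposeFin_symm_apply_succ, Equiv.swap_self]
            show f ((τ i).succ) = _
            rw [hfs _ (hne i hik), Function.update_of_ne (hne i hik)]
          · obtain rfl : i = k := Fin.ext h2
            rw [Perm.mul_apply, Perm.mul_apply, hW0, hWsucc,
              decomposeFin_symm_apply_zero, decomposeFin_symm_apply_succ, Equiv.swap_self]
            show f 0 + f ((τ i).succ) = _
            rw [hτ, Fin.succ_zero_eq_one, hf0, hf1, Function.update_self]
          · have hik : i ≠ k := fun h => by rw [h] at h2; omega
            have h3 : (k : ℕ) < (i : ℕ) := by omega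
            rw [Perm.mul_apply, hWgt i h3, decomposeFin_symm_apply_succ, Equiv.swap_self]
            show f ((τ i).succ) = _
            rw [hfs _ (hne i hik), Function.update_of_ne (hne i hik)]
        rw [hcoef, harg]
      refine Finset.sum_nbij' (fun σ => (decomposeFin (σ * W⁻¹)).2)
        (fun τ => decomposeFin.symm ((0 : Fin (m + 2)), τ) * W) ?_ ?_ ?_ ?_ ?_
      · intro σ hσ
        simp only [Finset.mem_filter, Finset.mem_univ, true_and] at hσ ⊢
        have hzeroval : (σ * W⁻¹) 0 = 0 := by
          rw [Perm.mul_apply, hWinv0, hσ.1]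
        have hE : decomposeFin.symm ((0 : Fin (m + 2)), (decomposeFin (σ * W⁻¹)).2)
            = σ * W⁻¹ := by
          conv_lhs => rw [show (0 : Fin (m + 2)) = (σ * W⁻¹) 0 from hzeroval.symm]
          exact decomposeFin_recon _
        have h1 : decomposeFin.symm ((0 : Fin (m + 2)), (decomposeFin (σ * W⁻¹)).2) k.succ
            = ((decomposeFin (σ * W⁻¹)).2 k).succ := by
          rw [decomposeFin_symm_apply_succ, Equiv.swap_self]
          rfl
        have h2 : (σ * W⁻¹) k.succ = 1 := by
          rw [Perm.mul_apply, hWinvsucc, hσ.2]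
        have h3 : ((decomposeFin (σ * W⁻¹)).2 k).succ = (0 : Fin (m + 1)).succ := by
          rw [← h1, hE, h2, Fin.succ_zero_eq_one]
        exact Fin.succ_injective _ h3
      · intro τ hτ
        simp only [Finset.mem_filter, Finset.mem_univ, true_and] at hτ ⊢
        constructor
        · rw [Perm.mul_apply, hW0, decomposeFin_symm_apply_zero]
        · rw [Perm.mul_apply, hWsucc, decomposeFin_symm_apply_succ, Equiv.swap_self]
          show ((τ k).succ : Fin (m + 2)) = 1
          rw [hτ, Fin.succ_zero_eq_one]
      · intro σ hσ
        simp only [Finset.mem_filter, Finset.mem_univ, true_and] at hσ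
        have hzeroval : (σ * W⁻¹) 0 = 0 := by
          rw [Perm.mul_apply, hWinv0, hσ.1]
        have hE : decomposeFin.symm ((0 : Fin (m + 2)), (decomposeFin (σ * W⁻¹)).2)
            = σ * W⁻¹ := by
          conv_lhs => rw [show (0 : Fin (m + 2)) = (σ * W⁻¹) 0 from hzeroval.symm]
          exact decomposeFin_recon _
        show decomposeFin.symm ((0 : Fin (m + 2)), (decomposeFin (σ * W⁻¹)).2) * W = σ
        rw [hE, inv_mul_cancel_right]
      · intro τ hτ
        show (decomposeFin ((decomposeFin.symm ((0 : Fin (m + 2)), τ) * W) * W⁻¹)).2 = τ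
        rw [mul_inv_cancel_right, Equiv.apply_symm_apply]
      · intro σ hσ
        have hmem := hσ
        simp only [Finset.mem_filter, Finset.mem_univ, true_and] at hmem
        have hzeroval : (σ * W⁻¹) 0 = 0 := by
          rw [Perm.mul_apply, hWinv0, hmem.1]
        have hE : decomposeFin.symm ((0 : Fin (m + 2)), (decomposeFin (σ * W⁻¹)).2)
            = σ * W⁻¹ := by
          conv_lhs => rw [show (0 : Fin (m + 2)) = (σ * W⁻¹) 0 from hzeroval.symm]
          exact decomposeFin_recon _
        have hτk : (decomposeFin (σ * W⁻¹)).2 k = 0 := by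
          have h1 : decomposeFin.symm ((0 : Fin (m + 2)), (decomposeFin (σ * W⁻¹)).2) k.succ
              = ((decomposeFin (σ * W⁻¹)).2 k).succ := by
            rw [decomposeFin_symm_apply_succ, Equiv.swap_self]
            rfl
          have h2 : (σ * W⁻¹) k.succ = 1 := by
            rw [Perm.mul_apply, hWinvsucc, hmem.2]
          have h3 : ((decomposeFin (σ * W⁻¹)).2 k).succ = (0 : Fin (m + 1)).succ := by
            rw [← h1, hE, h2, Fin.succ_zero_eq_one]
          exact Fin.succ_injective _ h3
        have hσeq : decomposeFin.symm ((0 : Fin (m + 2)), (decomposeFin (σ * W⁻¹)).2) * W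
            = σ := by
          rw [hE, inv_mul_cancel_right]
        conv_lhs => rw [← hσeq]
        exact hval _ hτk
    rw [Finset.sum_congr rfl (fun k _ => hk k)]
    have hfib : ∀ k : Fin (m + 1), univ.filter (fun τ : Perm (Fin (m + 1)) => τ k = 0)
        = univ.filter (fun τ : Perm (Fin (m + 1)) => τ⁻¹ 0 = k) := by
      intro k
      ext τ
      simp only [Finset.mem_filter, Finset.mem_univ, true_and]
      rw [Perm.inv_eq_iff_eq]
      exact comm
    rw [Finset.sum_congr rfl (fun k _ => by rw [hfib k])]
    rw [Finset.sum_fiberwise univ (fun τ : Perm (Fin (m + 1)) => τ⁻¹ 0)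
      (fun τ => (-(Perm.sign τ : ℤ)) • c (Function.update g 0 (x + y) ∘ ⇑τ))]
    unfold asymmetrization
    rw [← Finset.sum_neg_distrib]
    exact Finset.sum_congr rfl fun τ _ => by rw [neg_smul]
  have hfin : (asymmetrization (m + 1) c (Function.update g 0 y)
        + asymmetrization (m + 1) c (Function.update g 0 x))
      + (- asymmetrization (m + 1) c (Function.update g 0 (x + y))) = 0 := by
    rw [← hI, ← hII]
    rw [← hzero, hexp]
    abel
  have hfin2 : asymmetrization (m + 1) c (Function.update g 0 y)
        + asymmetrization (m + 1) c (Function.update g 0 x)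
      = asymmetrization (m + 1) c (Function.update g 0 (x + y)) := by
    rwa [add_neg_eq_zero] at hfin
  rw [← hfin2, add_comm]

end Stmt8Aux

/-- For any discrete abelian group `G` (possibly with torsion), the asymmetrization of
every `n`-cocycle `c ∈ Z^n(G,T)` is an asymmetric multicharacter: additive in each
variable and alternating under permutations of the variables. -/
theorem stmt_8 (G : Type*) [AddCommGroup G]
    (n : ℕ) (c : (Fin n → G) → AddCircle (1 : ℝ))
    (hc : coboundary n c = 0) :
    (∀ (g : Fin n → G) (i : Fin n) (x y : G),
        asymmetrization n c (Function.update g i (x + y)) =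
          asymmetrization n c (Function.update g i x) +
            asymmetrization n c (Function.update g i y)) ∧
    (∀ (g : Fin n → G) (σ : Equiv.Perm (Fin n)),
        asymmetrization n c (g ∘ σ) =
          (Equiv.Perm.sign σ : ℤ) • asymmetrization n c g) := by
  classical
  constructor
  · intro g i x y
    have hpos : 0 < n := i.pos
    obtain ⟨m, rfl⟩ : ∃ m, n = m + 1 := ⟨n - 1, by omega⟩
    set π : Equiv.Perm (Fin (m + 1)) := Equiv.swap 0 i with hπ
    have hcomp : ∀ z : G, Function.update g i z ∘ ⇑π = Function.update (g ∘ ⇑π) 0 z := by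
      intro z
      rw [Function.update_comp_equiv]
      rw [hπ, Equiv.symm_swap, Equiv.swap_apply_right]
    have key : ∀ z : G, asymmetrization (m + 1) c (Function.update g i z)
        = (Equiv.Perm.sign π : ℤ) •
            asymmetrization (m + 1) c (Function.update (g ∘ ⇑π) 0 z) := by
      intro z
      have h1 := Stmt8Aux.as_perm (m + 1) c (Function.update g i z) π
      rw [hcomp z] at h1
      calc asymmetrization (m + 1) c (Function.update g i z)
          = (1 : ℤ) • asymmetrization (m + 1) c (Function.update g i z) :=
            (one_smul _ _).symm
        _ = ((Equiv.Perm.sign π : ℤ) * (Equiv.Perm.sign π : ℤ)) •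
              asymmetrization (m + 1) c (Function.update g i z) := by
            rw [Stmt8Aux.sign_sq]
        _ = (Equiv.Perm.sign π : ℤ) • ((Equiv.Perm.sign π : ℤ) •
              asymmetrization (m + 1) c (Function.update g i z)) := by rw [mul_smul]
        _ = (Equiv.Perm.sign π : ℤ) •
              asymmetrization (m + 1) c (Function.update (g ∘ ⇑π) 0 z) := by rw [← h1]
    rw [key (x + y), key x, key y, Stmt8Aux.add_zero_case c hc (g ∘ ⇑π) x y, smul_add]
  · intro g σ
    exact Stmt8Aux.as_perm n c g σ
end

section
/- With H = M ×_{n_M} G as above (G = ℤ^{<ℕ}, M strictly upper triangular integer matrices, n_M(g,h)_{jk} = e_j(g)e_k(h) for j<k), the commutator subgroup [H,H] equals M, and M is the center of H. -/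
/-- Index set of strictly upper triangular entries. -/
abbrev UTIdx : Type := {p : ℕ × ℕ // p.1 < p.2}

/-- `M`: strictly upper triangular ℤ-matrices indexed by `ℕ` with finitely many
nonzero entries. -/
abbrev UT : Type := UTIdx →₀ ℤ

/-- `G = ℤ^{<ℕ}`: the free abelian group on countably many generators. -/
abbrev FreeAb : Type := ℕ →₀ ℤ

/-- The `M`-valued 2-cocycle `n_M` on `G`, with `(j,k)`-entry `e_j(g)·e_k(h)`, `j < k`. -/
noncomputable def nM (g h : FreeAb) : UT :=
  Finsupp.onFinset ((g.support ×ˢ h.support).subtype fun p => p.1 < p.2)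
    (fun p => g p.1.1 * h p.1.2)
    (fun p hp => by
      have h1 : g p.1.1 ≠ 0 := fun h0 => hp (by simp [h0])
      have h2 : h p.1.2 ≠ 0 := fun h0 => hp (by simp [h0])
      simp only [Finset.mem_subtype, Finset.mem_product, Finsupp.mem_support_iff]
      exact ⟨h1, h2⟩)

@[simp] lemma nM_apply (g h : FreeAb) (p : UTIdx) : nM g h p = g p.1.1 * h p.1.2 := rfl

lemma nM_add_left (g g' h : FreeAb) : nM (g + g') h = nM g h + nM g' h := by
  ext p; simp [add_mul]

lemma nM_add_right (g h h' : FreeAb) : nM g (h + h') = nM g h + nM g h' := by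
  ext p; simp [mul_add]

lemma nM_neg_left (g h : FreeAb) : nM (-g) h = -nM g h := by
  ext p; simp

lemma nM_zero_left (h : FreeAb) : nM 0 h = 0 := by
  ext p; simp

lemma nM_zero_right (g : FreeAb) : nM g 0 = 0 := by
  ext p; simp

/-- The central extension `H = M ×_{n_M} G`. -/
@[ext] structure HGrp where
  m : UT
  g : FreeAb

noncomputable instance : Mul HGrp := ⟨fun x y => ⟨x.m + y.m + nM x.g y.g, x.g + y.g⟩⟩
noncomputable instance : One HGrp := ⟨⟨0, 0⟩⟩
noncomputable instance : Inv HGrp := ⟨fun x => ⟨-x.m + nM x.g x.g, -x.g⟩⟩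

@[simp] lemma HGrp.mul_m (x y : HGrp) : (x * y).m = x.m + y.m + nM x.g y.g := rfl
@[simp] lemma HGrp.mul_g (x y : HGrp) : (x * y).g = x.g + y.g := rfl
@[simp] lemma HGrp.one_m : (1 : HGrp).m = 0 := rfl
@[simp] lemma HGrp.one_g : (1 : HGrp).g = 0 := rfl
@[simp] lemma HGrp.inv_m (x : HGrp) : x⁻¹.m = -x.m + nM x.g x.g := rfl
@[simp] lemma HGrp.inv_g (x : HGrp) : x⁻¹.g = -x.g := rfl

noncomputable instance : Group HGrp where
  mul_assoc a b c := by
    ext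
    · simp [nM_add_left, nM_add_right]; abel
    · simp [add_assoc]
  one_mul a := by
    ext
    · simp [nM_zero_left]
    · simp
  mul_one a := by
    ext
    · simp [nM_zero_right]
    · simp
  inv_mul_cancel a := by
    ext
    · simp [nM_neg_left]
    · simp

open scoped commutatorElement

lemma HGrp.commutator_eq (a b : FreeAb) :
    ⁅(⟨0, a⟩ : HGrp), (⟨0, b⟩ : HGrp)⁆ = ⟨nM a b - nM b a, 0⟩ := by
  show (⟨0,a⟩ : HGrp) * ⟨0,b⟩ * (⟨0,a⟩ : HGrp)⁻¹ * (⟨0,b⟩ : HGrp)⁻¹ = _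
  ext
  · simp [nM_add_left, nM_add_right, nM_neg_left]
    abel
  · simp

lemma nM_single (j k : ℕ) (h : j < k) (c : ℤ) :
    nM (Finsupp.single j c) (Finsupp.single k 1)
      = Finsupp.single (⟨(j,k), h⟩ : UTIdx) c := by
  ext p
  obtain ⟨⟨p1, p2⟩, hp⟩ := p
  simp only [nM_apply, Finsupp.single_apply]
  by_cases h1 : j = p1 <;> by_cases h2 : k = p2 <;>
    simp [h1, h2, Subtype.ext_iff, Prod.ext_iff]

lemma nM_single' (j k : ℕ) (h : j < k) (c : ℤ) :
    nM (Finsupp.single k 1) (Finsupp.single j c) = 0 := by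
  ext p
  obtain ⟨⟨p1, p2⟩, hp⟩ := p
  simp only [nM_apply, Finsupp.single_apply, Finsupp.coe_zero, Pi.zero_apply]
  by_cases h1 : k = p1 <;> by_cases h2 : j = p2 <;> simp [h1, h2] <;> omega

lemma HGrp.mem_commutator (m : UT) : (⟨m, 0⟩ : HGrp) ∈ commutator HGrp := by
  induction m using Finsupp.induction with
  | zero =>
    exact Subgroup.one_mem _
  | single_add p c f _ _ ih =>
    have key : (⟨Finsupp.single p c, 0⟩ : HGrp) ∈ commutator HGrp := by
      obtain ⟨⟨j, k⟩, hp⟩ := p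
      have := HGrp.commutator_eq (Finsupp.single j c) (Finsupp.single k 1)
      rw [nM_single j k hp c, nM_single' j k hp c, sub_zero] at this
      rw [← this, commutator_def]
      exact Subgroup.commutator_mem_commutator (Subgroup.mem_top _) (Subgroup.mem_top _)
    have : (⟨Finsupp.single p c, 0⟩ : HGrp) * ⟨f, 0⟩ = ⟨Finsupp.single p c + f, 0⟩ := by
      ext <;> simp [nM_zero_left]
    rw [← this]
    exact Subgroup.mul_mem _ key ih

/-- The commutator subgroup `[H,H]` of `H = M ×_{n_M} G` equals the central copy of
`M` (the elements with vanishing `G`-component), and `M` is the center of `H`. -/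
theorem stmt_14 :
    ((commutator HGrp : Subgroup HGrp) : Set HGrp) = {x : HGrp | x.g = 0} ∧
    ((Subgroup.center HGrp : Set HGrp) = {x : HGrp | x.g = 0}) := by
  constructor
  · ext x
    simp only [SetLike.mem_coe, Set.mem_setOf_eq]
    constructor
    · intro hx
      have hle : commutator HGrp ≤ {
          carrier := {x : HGrp | x.g = 0}
          mul_mem' := fun ha hb => by simp_all
          one_mem' := rfl
          inv_mem' := fun ha => by simp_all } := by
        rw [commutator_def, Subgroup.commutator_le]
        intro g1 _ g2 _
        show (⁅g1, g2⁆ : HGrp).g = 0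
        rw [commutatorElement_def]
        simp only [HGrp.mul_g, HGrp.inv_g]
        abel
      exact hle hx
    · intro hx
      have : x = ⟨x.m, 0⟩ := by ext <;> simp [hx]
      rw [this]
      exact HGrp.mem_commutator x.m
  · ext x
    simp only [SetLike.mem_coe, Set.mem_setOf_eq, Subgroup.mem_center_iff]
    constructor
    · intro hx
      ext k
      rcases Nat.eq_zero_or_pos k with rfl | hk
      · have h1 := hx ⟨0, Finsupp.single 1 1⟩
        have := congrArg HGrp.m h1
        simp only [HGrp.mul_m] at this
        rw [add_comm x.m] at this
        have h2 := add_left_cancel this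
        have := DFunLike.congr_fun h2 (⟨(0, 1), Nat.zero_lt_one⟩ : UTIdx)
        simpa using this.symm
      · have h1 := hx ⟨0, Finsupp.single 0 1⟩
        have := congrArg HGrp.m h1
        simp only [HGrp.mul_m] at this
        rw [add_comm x.m] at this
        have h2 := add_left_cancel this
        have := DFunLike.congr_fun h2 (⟨(0, k), hk⟩ : UTIdx)
        simp only [nM_apply, Finsupp.single_apply] at this
        rw [if_neg (show ¬(0 = k) by omega), mul_zero] at this
        simpa using this
    · intro hx y
      ext
      · simp [hx, nM_zero_left, nM_zero_right]; abel
      · simp [hx]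
end

section
/- Let G = ℤ^{<ℕ} and H = M ×_{n_M} G with projection π₀: H → G. Then every third cocycle of G becomes a coboundary after pullback: π₀^*(Z³(G,T)) ⊆ B³(H,T). In particular, for the cocycle c_a(g₁,g₂,g₃) = exp(2πi Σ_{i<j<k} a(i,j,k) e_i(g₁)e_j(g₂)e_k(g₃)) with real coefficients a(i,j,k), the 2-cochain b_a(g₁,g₂) = exp(2πi Σ_{i<j<k} a(i,j,k) e_i(π₀(g₁)) B_{e_j,e_k}(g₂)), where B_{η,ζ}(g) = Σ_{j<k} η(a_j)ζ(a_k) e_{j,k}(m₀(g)), satisfies π₀^*(c_a) = ∂_H b_a. -/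
/-- Multiplication of the central extension `H = M ×_{n_M} G`; `π₀` is the second
projection. -/
noncomputable def Hmul (x y : UT × FreeAb) : UT × FreeAb :=
  (x.1 + y.1 + nM x.2 y.2, x.2 + y.2)

/-- The `(j,k)`-entry `e_{j,k}(m₀(y))` of the `M`-component of `y ∈ H` (equal to
`B_{e_j,e_k}(y)`). -/
def entryM (y : UT × FreeAb) (j k : ℕ) : ℤ :=
  if h : j < k then y.1 ⟨(j, k), h⟩ else 0

/-- The third cocycle `c_a(g₁,g₂,g₃) = exp(2πi Σ_{i<j<k} a(i,j,k)e_i(g₁)e_j(g₂)e_k(g₃))`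
of `G`, written additively with values in `T = ℝ/ℤ`. -/
noncomputable def ca (a : ℕ → ℕ → ℕ → ℝ) (g₁ g₂ g₃ : FreeAb) : AddCircle (1 : ℝ) :=
  ((∑ᶠ p : ℕ × ℕ × ℕ,
      if p.1 < p.2.1 ∧ p.2.1 < p.2.2 then
        a p.1 p.2.1 p.2.2 * (g₁ p.1 : ℝ) * (g₂ p.2.1 : ℝ) * (g₃ p.2.2 : ℝ)
      else 0 : ℝ) : AddCircle (1 : ℝ))

/-- The 2-cochain `b_a(x,y) = exp(2πi Σ_{i<j<k} a(i,j,k) e_i(π₀(x)) B_{e_j,e_k}(y))`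
of `H`, where `B_{e_j,e_k}(y) = e_{j,k}(m₀(y))`. -/
noncomputable def ba (a : ℕ → ℕ → ℕ → ℝ) (x y : UT × FreeAb) : AddCircle (1 : ℝ) :=
  ((∑ᶠ p : ℕ × ℕ × ℕ,
      if p.1 < p.2.1 ∧ p.2.1 < p.2.2 then
        a p.1 p.2.1 p.2.2 * (x.2 p.1 : ℝ) * (entryM y p.2.1 p.2.2 : ℝ)
      else 0 : ℝ) : AddCircle (1 : ℝ))

namespace S15
variable {E : Type*} [AddCommGroup E]

/-- signed sum `f 0 + ... + f (m-1)` (negatively: `-(f m + ... + f (-1))`). -/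
def nuSum (m : ℤ) (f : ℤ → E) : E :=
  (∑ r ∈ Finset.range m.toNat, f r) - (∑ r ∈ Finset.range (-m).toNat, f (-1 - r))

@[simp] lemma nuSum_zero (f : ℤ → E) : nuSum 0 f = 0 := by simp [nuSum]

lemma nuSum_succ (m : ℤ) (f : ℤ → E) : nuSum (m + 1) f = nuSum m f + f m := by
  unfold nuSum
  rcases le_or_gt 0 m with h | h
  · have h1 : (m + 1).toNat = m.toNat + 1 := by omega
    have h2 : (-(m + 1)).toNat = 0 := by omega
    have h3 : (-m).toNat = 0 := by omega
    rw [h1, h2, h3, Finset.sum_range_succ]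
    have h4 : ((m.toNat : ℤ)) = m := by omega
    rw [h4]
    simp only [Finset.range_zero, Finset.sum_empty]
    abel
  · have h1 : (m + 1).toNat = 0 := by omega
    have h2 : m.toNat = 0 := by omega
    have h3 : (-m).toNat = (-(m + 1)).toNat + 1 := by omega
    rw [h1, h2, h3, Finset.sum_range_succ]
    have h5 : (-1 : ℤ) - ((-(m + 1)).toNat : ℤ) = m := by omega
    rw [h5]
    simp only [Finset.range_zero, Finset.sum_empty]
    abel

lemma nuSum_pred (m : ℤ) (f : ℤ → E) : nuSum (m - 1) f = nuSum m f - f (m - 1) := by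
  have := nuSum_succ (m - 1) f
  simp at this
  rw [this]; abel

lemma nuSum_tele (m : ℤ) (F : ℤ → E) :
    nuSum m (fun r => F (r + 1) - F r) = F m - F 0 := by
  induction m using Int.induction_on with
  | zero => simp
  | succ k ih => rw [nuSum_succ, ih]; abel
  | pred k ih =>
      rw [show (-(k:ℤ) - 1) = (-(k:ℤ)) - 1 by ring, nuSum_pred, ih]
      have : (-(k:ℤ) - 1 + 1) = -(k:ℤ) := by ring
      rw [this]; abel

lemma nuSum_tele' (m : ℤ) (F f : ℤ → E) (h : ∀ r, f r = F (r + 1) - F r) :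
    nuSum m f = F m - F 0 := by
  rw [show f = fun r => F (r + 1) - F r from funext h, nuSum_tele]

lemma nuSum_congr (m : ℤ) (f g : ℤ → E) (h : ∀ r, f r = g r) : nuSum m f = nuSum m g := by
  rw [funext h]

lemma nuSum_const (m : ℤ) (e : E) : nuSum m (fun _ => e) = m • e := by
  induction m using Int.induction_on with
  | zero => simp
  | succ k ih => rw [nuSum_succ, ih]; rw [add_smul]; simp
  | pred k ih =>
      rw [show (-(k:ℤ) - 1) = (-(k:ℤ)) - 1 by ring, nuSum_pred, ih, sub_smul]; simp

lemma map_nuSum {F : Type*} [AddCommGroup F] (L : E →ₗ[ℤ] F) (m : ℤ) (f : ℤ → E) :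
    L (nuSum m f) = nuSum m (fun r => L (f r)) := by
  simp [nuSum, map_sub, map_sum]

lemma nuSum_add (m : ℤ) (f g : ℤ → E) :
    nuSum m (fun r => f r + g r) = nuSum m f + nuSum m g := by
  simp [nuSum, Finset.sum_add_distrib]; abel

lemma nuSum_sub (m : ℤ) (f g : ℤ → E) :
    nuSum m (fun r => f r - g r) = nuSum m f - nuSum m g := by
  simp [nuSum, Finset.sum_sub_distrib]; abel


open Finsupp
abbrev G : Type := ℕ →₀ ℤ

/-- coordinates `> i` of `g` -/
noncomputable def tl (g : G) (i : ℕ) : G := g.filter (fun j => i < j)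
/-- coordinates `≥ i` of `g` -/
noncomputable def hi (g : G) (i : ℕ) : G := g.filter (fun j => i ≤ j)

@[simp] lemma tl_apply (g : G) (i j : ℕ) : tl g i j = if i < j then g j else 0 := by
  classical
  simp [tl, Finsupp.filter_apply]
@[simp] lemma hi_apply (g : G) (i j : ℕ) : hi g i j = if i ≤ j then g j else 0 := by
  classical
  simp [hi, Finsupp.filter_apply]

lemma hi_eq (g : G) (i : ℕ) : hi g i = Finsupp.single i (g i) + tl g i := by
  ext j
  rcases lt_trichotomy i j with h | h | h <;>
    simp [Finsupp.single_apply, h] <;> omega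

lemma tl_tl (g : G) {m i : ℕ} (h : m ≤ i) : tl (tl g m) i = tl g i := by
  ext j; simp only [tl_apply]
  by_cases hij : i < j <;> simp [hij] <;> omega

lemma hi_tl (g : G) {m i : ℕ} (h : m < i) : hi (tl g m) i = hi g i := by
  ext j; simp only [hi_apply, tl_apply]
  by_cases hij : i ≤ j <;> simp [hij] <;> omega

lemma tl_add (g h : G) (i : ℕ) : tl (g + h) i = tl g i + tl h i := by
  ext j; by_cases hij : i < j <;> simp [hij]

lemma tl_single_lt {i j : ℕ} (h : i < j) (n : ℤ) : tl (Finsupp.single j n) i = Finsupp.single j n := by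
  ext j'; by_cases hij : i < j' <;> simp [hij, Finsupp.single_apply] <;> omega

lemma tl_single_le {i j : ℕ} (h : j ≤ i) (n : ℤ) : tl (Finsupp.single j n) i = 0 := by
  ext j'; by_cases hij : i < j' <;> simp [hij, Finsupp.single_apply] <;> omega

lemma tele (F : G → E) (P : ℕ → Prop) [DecidablePred P]
    (hP : ∀ i j, i ≤ j → P j → P i) :
    ∀ (g : G), ∑ i ∈ g.support.filter P, (F (hi g i) - F (tl g i))
      = F g - F (g.filter (fun i => ¬ P i)) := by
  classical
  suffices H : ∀ (n : ℕ) (g : G), (g.support.filter P).card = n →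
      ∑ i ∈ g.support.filter P, (F (hi g i) - F (tl g i))
        = F g - F (g.filter (fun i => ¬ P i)) by
    intro g; exact H _ g rfl
  intro n
  induction n with
  | zero =>
      intro g hg
      rw [Finset.card_eq_zero] at hg
      rw [hg, Finset.sum_empty]
      have : g.filter (fun i => ¬ P i) = g := by
        ext i
        rw [Finsupp.filter_apply]
        by_cases hPi : P i
        · simp only [hPi, not_true_eq_false, if_false]
          by_contra hne
          have : i ∈ g.support.filter P := by
            simp [Finsupp.mem_support_iff, hPi]
            exact fun hh => hne hh.symm
          rw [hg] at this; exact absurd this (Finset.notMem_empty i)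
        · simp [hPi]
      rw [this]; abel
  | succ n ih =>
      intro g hg
      set s := g.support.filter P with hs
      have hne : s.Nonempty := by rw [← Finset.card_pos, hg]; omega
      set m := s.min' hne with hm
      have hmem : m ∈ s := s.min'_mem hne
      have hPm : P m := (Finset.mem_filter.mp hmem).2
      -- (a) hi g m = g
      have ha : hi g m = g := by
        ext i
        rw [hi_apply]
        by_cases him : m ≤ i
        · simp [him]
        · simp only [him, if_false]
          by_contra hne'
          have : i ∈ s := Finset.mem_filter.mpr
            ⟨Finsupp.mem_support_iff.mpr (fun h => hne' h.symm), hP i m (by omega) hPm⟩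
          exact absurd (s.min'_le i this) (by omega)
      set g' := tl g m with hg'
      have hsupp' : g'.support = g.support.filter (fun j => m < j) := by
        simp [hg', tl, Finsupp.support_filter]
      have hc : g'.support.filter P = s.erase m := by
        ext i
        simp only [Finset.mem_filter, Finset.mem_erase, hsupp', hs]
        constructor
        · rintro ⟨⟨hi1, hi2⟩, hi3⟩
          exact ⟨by omega, hi1, hi3⟩
        · rintro ⟨hi1, hi2, hi3⟩
          have : m ≤ i := s.min'_le i (Finset.mem_filter.mpr ⟨hi2, hi3⟩)
          exact ⟨⟨hi2, by omega⟩, hi3⟩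
      have hcard : (g'.support.filter P).card = n := by
        rw [hc, Finset.card_erase_of_mem hmem, hg]; omega
      have he : g'.filter (fun i => ¬ P i) = g.filter (fun i => ¬ P i) := by
        ext i
        rw [Finsupp.filter_apply, Finsupp.filter_apply]
        by_cases hPi : P i
        · simp [hPi]
        · simp only [hPi, not_false_eq_true, if_true, hg', tl_apply]
          have : m < i := by
            by_contra hmi
            exact hPi (hP i m (by omega) hPm)
          simp [this]
      have hterm : ∀ i ∈ s.erase m, (F (hi g' i) - F (tl g' i)) = (F (hi g i) - F (tl g i)) := by
        intro i hi'
        have h1 : i ∈ s := Finset.mem_of_mem_erase hi'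
        have h2 : i ≠ m := Finset.ne_of_mem_erase hi'
        have h3 : m < i := lt_of_le_of_ne (s.min'_le i h1) (Ne.symm h2)
        rw [hi_tl g h3, tl_tl g h3.le]
      have := ih g' hcard
      rw [hc] at this
      rw [Finset.sum_congr rfl hterm] at this
      rw [← Finset.add_sum_erase _ _ hmem, this, ha, he]
      abel


noncomputable def lmap {α : Type*} {E : Type*} [AddCommGroup E] (f : α → E) :
    (α →₀ ℤ) →ₗ[ℤ] E := Finsupp.lift E ℤ α f

@[simp] lemma lmap_single {α : Type*} {E : Type*} [AddCommGroup E] (f : α → E) (a : α) :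
    lmap f (Finsupp.single a 1) = f a := by
  simp [lmap]

lemma ext1 {α : Type*} {E : Type*} [AddCommGroup E] (L M : (α →₀ ℤ) →ₗ[ℤ] E)
    (h : ∀ a, L (Finsupp.single a 1) = M (Finsupp.single a 1)) : L = M := by
  apply Finsupp.lhom_ext
  intro a b
  have : (Finsupp.single a b : α →₀ ℤ) = b • Finsupp.single a 1 := by
    rw [Finsupp.smul_single]; norm_num
  rw [this, map_zsmul, map_zsmul, h]


/-! ### Koszul complex in degrees 0..3 -/

abbrev T2 : Type := {p : ℕ × ℕ // p.1 < p.2}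
abbrev T3 : Type := {t : ℕ × ℕ × ℕ // t.1 < t.2.1 ∧ t.2.1 < t.2.2}
abbrev K0 : Type := G →₀ ℤ
abbrev K1 : Type := (ℕ × G) →₀ ℤ
abbrev K2 : Type := (T2 × G) →₀ ℤ
abbrev K3 : Type := (T3 × G) →₀ ℤ

noncomputable def dd (i : ℕ) : G := Finsupp.single i 1

lemma w_succ (i : ℕ) (r : ℤ) (v : G) :
    Finsupp.single i r + v + dd i = Finsupp.single i (r + 1) + v := by
  rw [Finsupp.single_add, dd]; abel

noncomputable def dK1 : K1 →ₗ[ℤ] K0 := lmap fun p =>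
  Finsupp.single (p.2 + dd p.1) 1 - Finsupp.single p.2 1

noncomputable def dK2 : K2 →ₗ[ℤ] K1 := lmap fun p =>
  (Finsupp.single (p.1.1.2, p.2 + dd p.1.1.1) 1 - Finsupp.single (p.1.1.2, p.2) 1)
  - (Finsupp.single (p.1.1.1, p.2 + dd p.1.1.2) 1 - Finsupp.single (p.1.1.1, p.2) 1)

noncomputable def dK3 : K3 →ₗ[ℤ] K2 := lmap fun p =>
  (Finsupp.single ((⟨(p.1.1.2.1, p.1.1.2.2), p.1.2.2⟩ : T2), p.2 + dd p.1.1.1) 1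
   - Finsupp.single ((⟨(p.1.1.2.1, p.1.1.2.2), p.1.2.2⟩ : T2), p.2) 1)
  - (Finsupp.single ((⟨(p.1.1.1, p.1.1.2.2), lt_trans p.1.2.1 p.1.2.2⟩ : T2), p.2 + dd p.1.1.2.1) 1
   - Finsupp.single ((⟨(p.1.1.1, p.1.1.2.2), lt_trans p.1.2.1 p.1.2.2⟩ : T2), p.2) 1)
  + (Finsupp.single ((⟨(p.1.1.1, p.1.1.2.1), p.1.2.1⟩ : T2), p.2 + dd p.1.1.2.2) 1
   - Finsupp.single ((⟨(p.1.1.1, p.1.1.2.1), p.1.2.1⟩ : T2), p.2) 1)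

noncomputable def sK0 : K0 →ₗ[ℤ] K1 := lmap fun g =>
  ∑ i ∈ g.support, nuSum (g i) (fun r => Finsupp.single ((i : ℕ), Finsupp.single i r + tl g i) 1)

noncomputable def sK1 : K1 →ₗ[ℤ] K2 := lmap fun p =>
  ∑ i ∈ p.2.support, if h : i < p.1 then
    nuSum (p.2 i) (fun r =>
      Finsupp.single ((⟨(i, p.1), h⟩ : T2), Finsupp.single i r + tl p.2 i) 1) else 0

noncomputable def sK2 : K2 →ₗ[ℤ] K3 := lmap fun p =>
  ∑ i ∈ p.2.support, if h : i < p.1.1.1 then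
    nuSum (p.2 i) (fun r =>
      Finsupp.single ((⟨(i, p.1.1), ⟨h, p.1.2⟩⟩ : T3), Finsupp.single i r + tl p.2 i) 1) else 0

lemma CK0 (g : G) : dK1 (sK0 (Finsupp.single g 1)) =
    Finsupp.single g 1 - Finsupp.single (0 : G) 1 := by
  rw [sK0, lmap_single, map_sum]
  have step : ∀ i ∈ g.support,
      dK1 (nuSum (g i) (fun r => Finsupp.single ((i : ℕ), Finsupp.single i r + tl g i) 1))
        = Finsupp.single (hi g i) 1 - Finsupp.single (tl g i) 1 := by
    intro i _
    rw [map_nuSum]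
    rw [nuSum_tele' (g i) (fun t => Finsupp.single (Finsupp.single i t + tl g i) (1:ℤ)) _
      (fun r => by rw [dK1, lmap_single]; simp only; rw [w_succ])]
    simp only [Finsupp.single_zero, zero_add, hi_eq]
  rw [Finset.sum_congr rfl step]
  have := tele (fun v : G => Finsupp.single v (1:ℤ)) (fun _ => True) (by intros; trivial) g
  simp only [Finset.filter_true] at this
  rw [this]
  congr 1
  congr 1
  ext i
  rw [Finsupp.filter_apply]
  simp

lemma filt_not_lt (g : G) (j : ℕ) : g.filter (fun i => ¬ i < j) = hi g j := by
  classical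
  ext i; rw [Finsupp.filter_apply, hi_apply]
  by_cases h : i < j
  · simp [h]
  · simp [h]

lemma CK1 (j : ℕ) (g : G) :
    dK2 (sK1 (Finsupp.single ((j : ℕ), g) 1)) + sK0 (dK1 (Finsupp.single ((j:ℕ), g) 1))
      = Finsupp.single ((j:ℕ), g) 1 := by
  classical
  rw [sK1, lmap_single]
  simp only
  rw [map_sum]
  have part1 : ∀ i ∈ g.support,
      dK2 (if h : i < j then nuSum (g i) (fun r =>
          Finsupp.single ((⟨(i, j), h⟩ : T2), Finsupp.single i r + tl g i) 1) else 0)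
      = ((if i < j then (Finsupp.single ((j:ℕ), hi g i) (1:ℤ) - Finsupp.single ((j:ℕ), tl g i) 1) else 0)
        - (if i < j then (nuSum (g i) (fun r => Finsupp.single ((i:ℕ), (Finsupp.single i r + tl g i) + dd j) (1:ℤ))
             - nuSum (g i) (fun r => Finsupp.single ((i:ℕ), Finsupp.single i r + tl g i) 1)) else 0)) := by
    intro i _
    by_cases h : i < j
    · rw [dif_pos h, if_pos h, if_pos h, map_nuSum]
      have hr : ∀ r : ℤ, dK2 (Finsupp.single ((⟨(i, j), h⟩ : T2), Finsupp.single i r + tl g i) (1:ℤ))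
          = ((Finsupp.single ((j:ℕ), Finsupp.single i (r+1) + tl g i) (1:ℤ)
             - Finsupp.single ((j:ℕ), Finsupp.single i r + tl g i) 1)
            - (Finsupp.single ((i:ℕ), (Finsupp.single i r + tl g i) + dd j) 1
             - Finsupp.single ((i:ℕ), Finsupp.single i r + tl g i) 1)) := by
        intro r
        rw [dK2, lmap_single]
        simp only
        rw [w_succ]
      rw [nuSum_congr _ _ _ hr, nuSum_sub,
        nuSum_tele' (g i) (fun t => Finsupp.single ((j:ℕ), Finsupp.single i t + tl g i) (1:ℤ)) _
          (fun r => rfl)]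
      have e1 : Finsupp.single i (g i) + tl g i = hi g i := (hi_eq g i).symm
      have e2 : Finsupp.single i (0:ℤ) + tl g i = tl g i := by
        rw [Finsupp.single_zero, zero_add]
      rw [nuSum_sub, e1, e2]
    · rw [dif_neg h, if_neg h, if_neg h, map_zero, sub_zero]
  rw [Finset.sum_congr rfl part1, Finset.sum_sub_distrib]
  have sumA : ∑ i ∈ g.support,
      (if i < j then (Finsupp.single ((j:ℕ), hi g i) (1:ℤ) - Finsupp.single ((j:ℕ), tl g i) 1) else 0)
      = Finsupp.single ((j:ℕ), g) 1 - Finsupp.single ((j:ℕ), hi g j) 1 := by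
    rw [← Finset.sum_filter]
    have := tele (fun v : G => Finsupp.single ((j:ℕ), v) (1:ℤ)) (fun i => i < j)
      (fun a b hab hb => by omega) g
    rw [this, filt_not_lt]
  rw [sumA]
  -- part 2
  rw [dK1, lmap_single]
  simp only
  rw [map_sub, sK0, lmap_single, lmap_single]
  set s : Finset ℕ := g.support ∪ (g + dd j).support with hs
  have hjs : j ∈ s := by
    by_cases hgj : g j = 0
    · apply Finset.mem_union_right
      rw [Finsupp.mem_support_iff, Finsupp.add_apply, hgj, dd, Finsupp.single_eq_same]
      norm_num
    · exact Finset.mem_union_left _ (Finsupp.mem_support_iff.mpr hgj)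
  have ext1' : ∑ i ∈ (g + dd j).support, nuSum ((g + dd j) i)
        (fun r => Finsupp.single ((i:ℕ), Finsupp.single i r + tl (g + dd j) i) (1:ℤ))
      = ∑ i ∈ s, nuSum ((g + dd j) i)
        (fun r => Finsupp.single ((i:ℕ), Finsupp.single i r + tl (g + dd j) i) (1:ℤ)) := by
    apply Finset.sum_subset Finset.subset_union_right
    intro i _ hi'
    rw [Finsupp.notMem_support_iff] at hi'
    rw [hi', nuSum_zero]
  have ext2 : ∑ i ∈ g.support, nuSum (g i)
        (fun r => Finsupp.single ((i:ℕ), Finsupp.single i r + tl g i) (1:ℤ))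
      = ∑ i ∈ s, nuSum (g i)
        (fun r => Finsupp.single ((i:ℕ), Finsupp.single i r + tl g i) (1:ℤ)) := by
    apply Finset.sum_subset Finset.subset_union_left
    intro i _ hi'
    rw [Finsupp.notMem_support_iff] at hi'
    rw [hi', nuSum_zero]
  have ext3 : ∑ i ∈ g.support,
      (if i < j then (nuSum (g i) (fun r => Finsupp.single ((i:ℕ), (Finsupp.single i r + tl g i) + dd j) (1:ℤ))
             - nuSum (g i) (fun r => Finsupp.single ((i:ℕ), Finsupp.single i r + tl g i) 1)) else 0)
      = ∑ i ∈ s,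
      (if i < j then (nuSum (g i) (fun r => Finsupp.single ((i:ℕ), (Finsupp.single i r + tl g i) + dd j) (1:ℤ))
             - nuSum (g i) (fun r => Finsupp.single ((i:ℕ), Finsupp.single i r + tl g i) 1)) else 0) := by
    apply Finset.sum_subset Finset.subset_union_left
    intro i _ hi'
    rw [Finsupp.notMem_support_iff] at hi'
    rw [hi', nuSum_zero, nuSum_zero]
    simp
  rw [ext1', ext2, ext3]
  have key : ∀ i ∈ s,
      ((nuSum ((g + dd j) i) (fun r => Finsupp.single ((i:ℕ), Finsupp.single i r + tl (g + dd j) i) (1:ℤ))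
        - nuSum (g i) (fun r => Finsupp.single ((i:ℕ), Finsupp.single i r + tl g i) 1))
      - (if i < j then (nuSum (g i) (fun r => Finsupp.single ((i:ℕ), (Finsupp.single i r + tl g i) + dd j) (1:ℤ))
             - nuSum (g i) (fun r => Finsupp.single ((i:ℕ), Finsupp.single i r + tl g i) 1)) else 0))
      = (if i = j then Finsupp.single ((j:ℕ), hi g j) (1:ℤ) else 0) := by
    intro i _
    rcases lt_trichotomy i j with h | h | h
    · rw [if_pos h, if_neg (by omega)]
      have hv : (g + dd j) i = g i := by
        rw [Finsupp.add_apply, dd, Finsupp.single_apply, if_neg (by omega), add_zero]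
      have ht : tl (g + dd j) i = tl g i + dd j := by
        rw [tl_add, dd, tl_single_lt h]
      rw [hv, ht]
      rw [nuSum_congr (g i) (fun r => Finsupp.single ((i:ℕ), Finsupp.single i r + (tl g i + dd j)) (1:ℤ))
        (fun r => Finsupp.single ((i:ℕ), (Finsupp.single i r + tl g i) + dd j) (1:ℤ))
        (fun r => by simp only [add_assoc])]
      abel
    · subst h
      rw [if_neg (by omega), if_pos rfl, sub_zero]
      have hv : (g + dd i) i = g i + 1 := by
        rw [Finsupp.add_apply, dd, Finsupp.single_eq_same]
      have ht : tl (g + dd i) i = tl g i := by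
        rw [tl_add, dd, tl_single_le (le_refl i), add_zero]
      rw [hv, ht, nuSum_succ]
      rw [hi_eq]
      abel
    · rw [if_neg (by omega), if_neg (by omega), sub_zero]
      have hv : (g + dd j) i = g i := by
        rw [Finsupp.add_apply, dd, Finsupp.single_apply, if_neg (by omega), add_zero]
      have ht : tl (g + dd j) i = tl g i := by
        rw [tl_add, dd, tl_single_le (by omega), add_zero]
      rw [hv, ht, sub_self]
  have hcomb : (∑ i ∈ s, nuSum ((g + dd j) i)
        (fun r => Finsupp.single ((i:ℕ), Finsupp.single i r + tl (g + dd j) i) (1:ℤ)))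
      - (∑ i ∈ s, nuSum (g i)
        (fun r => Finsupp.single ((i:ℕ), Finsupp.single i r + tl g i) (1:ℤ)))
      - (∑ i ∈ s,
      (if i < j then (nuSum (g i) (fun r => Finsupp.single ((i:ℕ), (Finsupp.single i r + tl g i) + dd j) (1:ℤ))
             - nuSum (g i) (fun r => Finsupp.single ((i:ℕ), Finsupp.single i r + tl g i) 1)) else 0))
      = Finsupp.single ((j:ℕ), hi g j) (1:ℤ) := by
    rw [← Finset.sum_sub_distrib, ← Finset.sum_sub_distrib]
    rw [Finset.sum_congr rfl key, Finset.sum_ite_eq' s j, if_pos hjs]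
  rw [← hcomb]
  abel

lemma CK2 (j k : ℕ) (hjk : j < k) (g : G) :
    dK3 (sK2 (Finsupp.single ((⟨(j,k),hjk⟩ : T2), g) 1))
      + sK1 (dK2 (Finsupp.single ((⟨(j,k),hjk⟩ : T2), g) 1))
      = Finsupp.single ((⟨(j,k),hjk⟩ : T2), g) 1 := by
  classical
  rw [sK2, lmap_single]
  simp only
  rw [map_sum]
  -- notation for the three groups of terms
  have part1 : ∀ i ∈ g.support,
      dK3 (if h : i < j then nuSum (g i) (fun r =>
          Finsupp.single ((⟨(i,(j,k)), ⟨h, hjk⟩⟩ : T3), Finsupp.single i r + tl g i) 1) else 0)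
      = (((if i < j then (Finsupp.single ((⟨(j,k),hjk⟩ : T2), hi g i) (1:ℤ)
              - Finsupp.single ((⟨(j,k),hjk⟩ : T2), tl g i) 1) else 0)
        - (if h : i < j then (nuSum (g i) (fun r =>
              Finsupp.single ((⟨(i,k), lt_trans h hjk⟩ : T2), (Finsupp.single i r + tl g i) + dd j) (1:ℤ))
             - nuSum (g i) (fun r =>
              Finsupp.single ((⟨(i,k), lt_trans h hjk⟩ : T2), Finsupp.single i r + tl g i) 1)) else 0))
        + (if h : i < j then (nuSum (g i) (fun r =>
              Finsupp.single ((⟨(i,j), h⟩ : T2), (Finsupp.single i r + tl g i) + dd k) (1:ℤ))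
             - nuSum (g i) (fun r =>
              Finsupp.single ((⟨(i,j), h⟩ : T2), Finsupp.single i r + tl g i) 1)) else 0)) := by
    intro i _
    by_cases h : i < j
    · rw [dif_pos h, if_pos h, dif_pos h, dif_pos h, map_nuSum]
      have hr : ∀ r : ℤ, dK3 (Finsupp.single ((⟨(i,(j,k)), ⟨h, hjk⟩⟩ : T3), Finsupp.single i r + tl g i) (1:ℤ))
          = (((Finsupp.single ((⟨(j,k),hjk⟩ : T2), Finsupp.single i (r+1) + tl g i) (1:ℤ)
             - Finsupp.single ((⟨(j,k),hjk⟩ : T2), Finsupp.single i r + tl g i) 1)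
            - (Finsupp.single ((⟨(i,k), lt_trans h hjk⟩ : T2), (Finsupp.single i r + tl g i) + dd j) 1
             - Finsupp.single ((⟨(i,k), lt_trans h hjk⟩ : T2), Finsupp.single i r + tl g i) 1))
            + (Finsupp.single ((⟨(i,j), h⟩ : T2), (Finsupp.single i r + tl g i) + dd k) 1
             - Finsupp.single ((⟨(i,j), h⟩ : T2), Finsupp.single i r + tl g i) 1)) := by
        intro r
        rw [dK3, lmap_single]
        simp only
        rw [w_succ]
      rw [nuSum_congr _ _ _ hr, nuSum_add, nuSum_sub,
        nuSum_tele' (g i) (fun t => Finsupp.single ((⟨(j,k),hjk⟩ : T2), Finsupp.single i t + tl g i) (1:ℤ)) _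
          (fun r => rfl)]
      have e1 : Finsupp.single i (g i) + tl g i = hi g i := (hi_eq g i).symm
      have e2 : Finsupp.single i (0:ℤ) + tl g i = tl g i := by
        rw [Finsupp.single_zero, zero_add]
      rw [nuSum_sub, nuSum_sub, e1, e2]
    · rw [dif_neg h, if_neg h, dif_neg h, dif_neg h, map_zero, sub_zero, add_zero]
  rw [Finset.sum_congr rfl part1, Finset.sum_add_distrib, Finset.sum_sub_distrib]
  have sumA : ∑ i ∈ g.support,
      (if i < j then (Finsupp.single ((⟨(j,k),hjk⟩ : T2), hi g i) (1:ℤ)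
        - Finsupp.single ((⟨(j,k),hjk⟩ : T2), tl g i) 1) else 0)
      = Finsupp.single ((⟨(j,k),hjk⟩ : T2), g) 1 - Finsupp.single ((⟨(j,k),hjk⟩ : T2), hi g j) 1 := by
    rw [← Finset.sum_filter]
    have := tele (fun v : G => Finsupp.single ((⟨(j,k),hjk⟩ : T2), v) (1:ℤ)) (fun i => i < j)
      (fun a b hab hb => by omega) g
    rw [this, filt_not_lt]
  rw [sumA]
  -- part 2
  rw [dK2, lmap_single]
  simp only
  rw [map_sub, map_sub, map_sub, sK1, lmap_single, lmap_single, lmap_single, lmap_single]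
  simp only
  -- common index sets
  set s1 : Finset ℕ := g.support ∪ (g + dd j).support with hs1
  set s2 : Finset ℕ := g.support ∪ (g + dd k).support with hs2
  have hjs1 : j ∈ s1 := by
    by_cases hgj : g j = 0
    · apply Finset.mem_union_right
      rw [Finsupp.mem_support_iff, Finsupp.add_apply, hgj, dd, Finsupp.single_eq_same]
      norm_num
    · exact Finset.mem_union_left _ (Finsupp.mem_support_iff.mpr hgj)
  have extend : ∀ (δv : G) (F : ℕ → ℤ → (ℤ → K2)),
      (∀ i, F i 0 = fun _ => 0) → True := fun _ _ _ => trivial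
  -- extend each sum to the common index set
  have ext1a : ∑ i ∈ (g + dd j).support, (if h : i < k then nuSum ((g + dd j) i)
        (fun r => Finsupp.single ((⟨(i,k), h⟩ : T2), Finsupp.single i r + tl (g + dd j) i) (1:ℤ)) else 0)
      = ∑ i ∈ s1, (if h : i < k then nuSum ((g + dd j) i)
        (fun r => Finsupp.single ((⟨(i,k), h⟩ : T2), Finsupp.single i r + tl (g + dd j) i) (1:ℤ)) else 0) := by
    apply Finset.sum_subset Finset.subset_union_right
    intro i _ hi'
    rw [Finsupp.notMem_support_iff] at hi'
    rw [hi']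
    simp
  have ext1b : ∑ i ∈ g.support, (if h : i < k then nuSum (g i)
        (fun r => Finsupp.single ((⟨(i,k), h⟩ : T2), Finsupp.single i r + tl g i) (1:ℤ)) else 0)
      = ∑ i ∈ s1, (if h : i < k then nuSum (g i)
        (fun r => Finsupp.single ((⟨(i,k), h⟩ : T2), Finsupp.single i r + tl g i) (1:ℤ)) else 0) := by
    apply Finset.sum_subset Finset.subset_union_left
    intro i _ hi'
    rw [Finsupp.notMem_support_iff] at hi'
    rw [hi']
    simp
  have extB : ∑ i ∈ g.support, (if h : i < j then (nuSum (g i) (fun r =>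
              Finsupp.single ((⟨(i,k), lt_trans h hjk⟩ : T2), (Finsupp.single i r + tl g i) + dd j) (1:ℤ))
             - nuSum (g i) (fun r =>
              Finsupp.single ((⟨(i,k), lt_trans h hjk⟩ : T2), Finsupp.single i r + tl g i) 1)) else 0)
      = ∑ i ∈ s1, (if h : i < j then (nuSum (g i) (fun r =>
              Finsupp.single ((⟨(i,k), lt_trans h hjk⟩ : T2), (Finsupp.single i r + tl g i) + dd j) (1:ℤ))
             - nuSum (g i) (fun r =>
              Finsupp.single ((⟨(i,k), lt_trans h hjk⟩ : T2), Finsupp.single i r + tl g i) 1)) else 0) := by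
    apply Finset.sum_subset Finset.subset_union_left
    intro i _ hi'
    rw [Finsupp.notMem_support_iff] at hi'
    rw [hi']
    simp
  have ext2a : ∑ i ∈ (g + dd k).support, (if h : i < j then nuSum ((g + dd k) i)
        (fun r => Finsupp.single ((⟨(i,j), h⟩ : T2), Finsupp.single i r + tl (g + dd k) i) (1:ℤ)) else 0)
      = ∑ i ∈ s2, (if h : i < j then nuSum ((g + dd k) i)
        (fun r => Finsupp.single ((⟨(i,j), h⟩ : T2), Finsupp.single i r + tl (g + dd k) i) (1:ℤ)) else 0) := by
    apply Finset.sum_subset Finset.subset_union_right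
    intro i _ hi'
    rw [Finsupp.notMem_support_iff] at hi'
    rw [hi']
    simp
  have ext2b : ∑ i ∈ g.support, (if h : i < j then nuSum (g i)
        (fun r => Finsupp.single ((⟨(i,j), h⟩ : T2), Finsupp.single i r + tl g i) (1:ℤ)) else 0)
      = ∑ i ∈ s2, (if h : i < j then nuSum (g i)
        (fun r => Finsupp.single ((⟨(i,j), h⟩ : T2), Finsupp.single i r + tl g i) (1:ℤ)) else 0) := by
    apply Finset.sum_subset Finset.subset_union_left
    intro i _ hi'
    rw [Finsupp.notMem_support_iff] at hi'
    rw [hi']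
    simp
  have extC : ∑ i ∈ g.support, (if h : i < j then (nuSum (g i) (fun r =>
              Finsupp.single ((⟨(i,j), h⟩ : T2), (Finsupp.single i r + tl g i) + dd k) (1:ℤ))
             - nuSum (g i) (fun r =>
              Finsupp.single ((⟨(i,j), h⟩ : T2), Finsupp.single i r + tl g i) 1)) else 0)
      = ∑ i ∈ s2, (if h : i < j then (nuSum (g i) (fun r =>
              Finsupp.single ((⟨(i,j), h⟩ : T2), (Finsupp.single i r + tl g i) + dd k) (1:ℤ))
             - nuSum (g i) (fun r =>
              Finsupp.single ((⟨(i,j), h⟩ : T2), Finsupp.single i r + tl g i) 1)) else 0) := by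
    apply Finset.sum_subset Finset.subset_union_left
    intro i _ hi'
    rw [Finsupp.notMem_support_iff] at hi'
    rw [hi']
    simp
  rw [ext1a, ext1b, extB, ext2a, ext2b, extC]
  -- pointwise identities
  have key1 : ∀ i ∈ s1,
      (if h : i < j then (nuSum (g i) (fun r =>
              Finsupp.single ((⟨(i,k), lt_trans h hjk⟩ : T2), (Finsupp.single i r + tl g i) + dd j) (1:ℤ))
             - nuSum (g i) (fun r =>
              Finsupp.single ((⟨(i,k), lt_trans h hjk⟩ : T2), Finsupp.single i r + tl g i) 1)) else 0)
      = ((if h : i < k then nuSum ((g + dd j) i)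
        (fun r => Finsupp.single ((⟨(i,k), h⟩ : T2), Finsupp.single i r + tl (g + dd j) i) (1:ℤ)) else 0)
        - (if h : i < k then nuSum (g i)
        (fun r => Finsupp.single ((⟨(i,k), h⟩ : T2), Finsupp.single i r + tl g i) (1:ℤ)) else 0))
        - (if i = j then Finsupp.single ((⟨(j,k),hjk⟩ : T2), hi g j) (1:ℤ) else 0) := by
    intro i _
    rcases lt_trichotomy i j with h | h | h
    · rw [dif_pos h, dif_pos (lt_trans h hjk), dif_pos (lt_trans h hjk), if_neg (by omega), sub_zero]
      have hv : (g + dd j) i = g i := by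
        rw [Finsupp.add_apply, dd, Finsupp.single_apply, if_neg (by omega), add_zero]
      have ht : tl (g + dd j) i = tl g i + dd j := by
        rw [tl_add, dd, tl_single_lt h]
      rw [hv, ht]
      rw [nuSum_congr (g i)
        (fun r => Finsupp.single ((⟨(i,k), lt_trans h hjk⟩ : T2), Finsupp.single i r + (tl g i + dd j)) (1:ℤ))
        (fun r => Finsupp.single ((⟨(i,k), lt_trans h hjk⟩ : T2), (Finsupp.single i r + tl g i) + dd j) (1:ℤ))
        (fun r => by simp only [add_assoc])]
    · subst h
      rw [dif_neg (by omega), dif_pos hjk, dif_pos hjk, if_pos rfl]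
      have hv : (g + dd i) i = g i + 1 := by
        rw [Finsupp.add_apply, dd, Finsupp.single_eq_same]
      have ht : tl (g + dd i) i = tl g i := by
        rw [tl_add, dd, tl_single_le (le_refl i), add_zero]
      rw [hv, ht, nuSum_succ, hi_eq]
      abel
    · rw [dif_neg (by omega), if_neg (by omega), sub_zero]
      have hv : (g + dd j) i = g i := by
        rw [Finsupp.add_apply, dd, Finsupp.single_apply, if_neg (by omega), add_zero]
      have ht : tl (g + dd j) i = tl g i := by
        rw [tl_add, dd, tl_single_le (by omega), add_zero]
      rw [hv, ht, sub_self]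
  have key2 : ∀ i ∈ s2,
      (if h : i < j then (nuSum (g i) (fun r =>
              Finsupp.single ((⟨(i,j), h⟩ : T2), (Finsupp.single i r + tl g i) + dd k) (1:ℤ))
             - nuSum (g i) (fun r =>
              Finsupp.single ((⟨(i,j), h⟩ : T2), Finsupp.single i r + tl g i) 1)) else 0)
      = ((if h : i < j then nuSum ((g + dd k) i)
        (fun r => Finsupp.single ((⟨(i,j), h⟩ : T2), Finsupp.single i r + tl (g + dd k) i) (1:ℤ)) else 0)
        - (if h : i < j then nuSum (g i)
        (fun r => Finsupp.single ((⟨(i,j), h⟩ : T2), Finsupp.single i r + tl g i) (1:ℤ)) else 0)) := by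
    intro i _
    by_cases h : i < j
    · rw [dif_pos h, dif_pos h, dif_pos h]
      have hv : (g + dd k) i = g i := by
        rw [Finsupp.add_apply, dd, Finsupp.single_apply, if_neg (by omega), add_zero]
      have ht : tl (g + dd k) i = tl g i + dd k := by
        rw [tl_add, dd, tl_single_lt (by omega)]
      rw [hv, ht]
      rw [nuSum_congr (g i)
        (fun r => Finsupp.single ((⟨(i,j), h⟩ : T2), Finsupp.single i r + (tl g i + dd k)) (1:ℤ))
        (fun r => Finsupp.single ((⟨(i,j), h⟩ : T2), (Finsupp.single i r + tl g i) + dd k) (1:ℤ))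
        (fun r => by simp only [add_assoc])]
    · rw [dif_neg h, dif_neg h, dif_neg h, sub_self]
  have hB : ∑ i ∈ s1, (if h : i < j then (nuSum (g i) (fun r =>
              Finsupp.single ((⟨(i,k), lt_trans h hjk⟩ : T2), (Finsupp.single i r + tl g i) + dd j) (1:ℤ))
             - nuSum (g i) (fun r =>
              Finsupp.single ((⟨(i,k), lt_trans h hjk⟩ : T2), Finsupp.single i r + tl g i) 1)) else 0)
      = (∑ i ∈ s1, (if h : i < k then nuSum ((g + dd j) i)
        (fun r => Finsupp.single ((⟨(i,k), h⟩ : T2), Finsupp.single i r + tl (g + dd j) i) (1:ℤ)) else 0))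
        - (∑ i ∈ s1, (if h : i < k then nuSum (g i)
        (fun r => Finsupp.single ((⟨(i,k), h⟩ : T2), Finsupp.single i r + tl g i) (1:ℤ)) else 0))
        - Finsupp.single ((⟨(j,k),hjk⟩ : T2), hi g j) (1:ℤ) := by
    rw [Finset.sum_congr rfl key1, Finset.sum_sub_distrib, Finset.sum_sub_distrib,
      Finset.sum_ite_eq' s1 j, if_pos hjs1]
  have hC : ∑ i ∈ s2, (if h : i < j then (nuSum (g i) (fun r =>
              Finsupp.single ((⟨(i,j), h⟩ : T2), (Finsupp.single i r + tl g i) + dd k) (1:ℤ))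
             - nuSum (g i) (fun r =>
              Finsupp.single ((⟨(i,j), h⟩ : T2), Finsupp.single i r + tl g i) 1)) else 0)
      = (∑ i ∈ s2, (if h : i < j then nuSum ((g + dd k) i)
        (fun r => Finsupp.single ((⟨(i,j), h⟩ : T2), Finsupp.single i r + tl (g + dd k) i) (1:ℤ)) else 0))
        - (∑ i ∈ s2, (if h : i < j then nuSum (g i)
        (fun r => Finsupp.single ((⟨(i,j), h⟩ : T2), Finsupp.single i r + tl g i) (1:ℤ)) else 0)) := by
    rw [Finset.sum_congr rfl key2, Finset.sum_sub_distrib]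
  rw [hB, hC]
  abel

/-! ### Bar resolution in degrees 0..4 (inhomogeneous cells with explicit base point) -/

abbrev B0 : Type := G →₀ ℤ
abbrev B1 : Type := (G × G) →₀ ℤ
abbrev B2 : Type := (G × G × G) →₀ ℤ
abbrev B3 : Type := (G × G × G × G) →₀ ℤ
abbrev B4 : Type := (G × G × G × G × G) →₀ ℤ

noncomputable def dB1 : B1 →ₗ[ℤ] B0 := lmap fun p =>
  Finsupp.single (p.1 + p.2) 1 - Finsupp.single p.1 1
noncomputable def dB2 : B2 →ₗ[ℤ] B1 := lmap fun p =>
  Finsupp.single (p.1 + p.2.1, p.2.2) 1 - Finsupp.single (p.1, p.2.1 + p.2.2) 1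
    + Finsupp.single (p.1, p.2.1) 1
noncomputable def dB3 : B3 →ₗ[ℤ] B2 := lmap fun p =>
  Finsupp.single (p.1 + p.2.1, p.2.2.1, p.2.2.2) 1
    - Finsupp.single (p.1, p.2.1 + p.2.2.1, p.2.2.2) 1
    + Finsupp.single (p.1, p.2.1, p.2.2.1 + p.2.2.2) 1
    - Finsupp.single (p.1, p.2.1, p.2.2.1) 1
noncomputable def dB4 : B4 →ₗ[ℤ] B3 := lmap fun p =>
  Finsupp.single (p.1 + p.2.1, p.2.2.1, p.2.2.2.1, p.2.2.2.2) 1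
    - Finsupp.single (p.1, p.2.1 + p.2.2.1, p.2.2.2.1, p.2.2.2.2) 1
    + Finsupp.single (p.1, p.2.1, p.2.2.1 + p.2.2.2.1, p.2.2.2.2) 1
    - Finsupp.single (p.1, p.2.1, p.2.2.1, p.2.2.2.1 + p.2.2.2.2) 1
    + Finsupp.single (p.1, p.2.1, p.2.2.1, p.2.2.2.1) 1

noncomputable def sB0 : B0 →ₗ[ℤ] B1 := lmap fun g => Finsupp.single ((0:G), g) 1
noncomputable def sB1 : B1 →ₗ[ℤ] B2 := lmap fun p => Finsupp.single ((0:G), p.1, p.2) 1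
noncomputable def sB2 : B2 →ₗ[ℤ] B3 := lmap fun p => Finsupp.single ((0:G), p.1, p.2.1, p.2.2) 1
noncomputable def sB3 : B3 →ₗ[ℤ] B4 := lmap fun p =>
  Finsupp.single ((0:G), p.1, p.2.1, p.2.2.1, p.2.2.2) 1

/-- translations -/
noncomputable def tr0 (a : G) : B0 →ₗ[ℤ] B0 := lmap fun g => Finsupp.single (a + g) 1
noncomputable def trB1 (a : G) : B1 →ₗ[ℤ] B1 := lmap fun p => Finsupp.single (a + p.1, p.2) 1
noncomputable def trB2 (a : G) : B2 →ₗ[ℤ] B2 := lmap fun p => Finsupp.single (a + p.1, p.2.1, p.2.2) 1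
noncomputable def trB3 (a : G) : B3 →ₗ[ℤ] B3 := lmap fun p =>
  Finsupp.single (a + p.1, p.2.1, p.2.2.1, p.2.2.2) 1
noncomputable def trK1 (a : G) : K1 →ₗ[ℤ] K1 := lmap fun p => Finsupp.single (p.1, a + p.2) 1
noncomputable def trK2 (a : G) : K2 →ₗ[ℤ] K2 := lmap fun p => Finsupp.single (p.1, a + p.2) 1
noncomputable def trK3 (a : G) : K3 →ₗ[ℤ] K3 := lmap fun p => Finsupp.single (p.1, a + p.2) 1

lemma trtrK1 (a b : G) (x : K1) : trK1 a (trK1 b x) = trK1 (a + b) x := by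
  have : trK1 a ∘ₗ trK1 b = trK1 (a + b) := by
    apply ext1; intro p
    simp only [trK1, LinearMap.comp_apply, lmap_single, add_assoc]
  exact DFunLike.congr_fun this x
lemma trtrK2 (a b : G) (x : K2) : trK2 a (trK2 b x) = trK2 (a + b) x := by
  have : trK2 a ∘ₗ trK2 b = trK2 (a + b) := by
    apply ext1; intro p
    simp only [trK2, LinearMap.comp_apply, lmap_single, add_assoc]
  exact DFunLike.congr_fun this x
lemma trtrK3 (a b : G) (x : K3) : trK3 a (trK3 b x) = trK3 (a + b) x := by
  have : trK3 a ∘ₗ trK3 b = trK3 (a + b) := by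
    apply ext1; intro p
    simp only [trK3, LinearMap.comp_apply, lmap_single, add_assoc]
  exact DFunLike.congr_fun this x

lemma trdK1 (a : G) : dK1 ∘ₗ trK1 a = tr0 a ∘ₗ dK1 := by
  apply ext1; intro p
  simp only [dK1, trK1, tr0, LinearMap.comp_apply, lmap_single, map_sub, add_assoc]
lemma trdK2 (a : G) : dK2 ∘ₗ trK2 a = trK1 a ∘ₗ dK2 := by
  apply ext1; intro p
  simp only [dK2, trK2, trK1, LinearMap.comp_apply, lmap_single, map_sub, map_add, add_assoc]
lemma trdK3 (a : G) : dK3 ∘ₗ trK3 a = trK2 a ∘ₗ dK3 := by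
  apply ext1; intro p
  simp only [dK3, trK3, trK2, LinearMap.comp_apply, lmap_single, map_sub, map_add, add_assoc]

lemma trdB1 (a : G) : dB1 ∘ₗ trB1 a = tr0 a ∘ₗ dB1 := by
  apply ext1; intro p
  simp only [dB1, trB1, tr0, LinearMap.comp_apply, lmap_single, map_sub, add_assoc]
lemma trdB2 (a : G) : dB2 ∘ₗ trB2 a = trB1 a ∘ₗ dB2 := by
  apply ext1; intro p
  simp only [dB2, trB2, trB1, LinearMap.comp_apply, lmap_single, map_sub, map_add, add_assoc]
lemma trdB3 (a : G) : dB3 ∘ₗ trB3 a = trB2 a ∘ₗ dB3 := by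
  apply ext1; intro p
  simp only [dB3, trB3, trB2, LinearMap.comp_apply, lmap_single, map_sub, map_add, add_assoc]

/-- contraction identities for the bar complex -/
lemma CB1 : dB2 ∘ₗ sB1 + sB0 ∘ₗ dB1 = LinearMap.id := by
  apply ext1; intro p
  simp only [dB2, sB1, sB0, dB1, LinearMap.add_apply, LinearMap.comp_apply, lmap_single,
    map_sub, map_add, LinearMap.id_apply, zero_add]
  abel
lemma CB2 : dB3 ∘ₗ sB2 + sB1 ∘ₗ dB2 = LinearMap.id := by
  apply ext1; intro p
  simp only [dB3, sB2, sB1, dB2, LinearMap.add_apply, LinearMap.comp_apply, lmap_single,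
    map_sub, map_add, LinearMap.id_apply, zero_add]
  abel
lemma CB3 : dB4 ∘ₗ sB3 + sB2 ∘ₗ dB3 = LinearMap.id := by
  apply ext1; intro p
  simp only [dB4, sB3, sB2, dB3, LinearMap.add_apply, LinearMap.comp_apply, lmap_single,
    map_sub, map_add, LinearMap.id_apply, zero_add]
  abel

lemma ddB2 : dB1 ∘ₗ dB2 = 0 := by
  apply ext1; intro p
  simp only [dB1, dB2, LinearMap.comp_apply, lmap_single, map_sub, map_add, LinearMap.zero_apply,
    add_assoc]
  abel
lemma ddB3 : dB2 ∘ₗ dB3 = 0 := by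
  apply ext1; intro p
  simp only [dB2, dB3, LinearMap.comp_apply, lmap_single, map_sub, map_add, LinearMap.zero_apply,
    add_assoc]
  abel

/-! ### packaged contraction identities -/

noncomputable def epsK : K0 →ₗ[ℤ] ℤ := lmap fun _ => (1:ℤ)

lemma CK0' : dK1 ∘ₗ sK0 =
    LinearMap.id - (LinearMap.toSpanSingleton ℤ K0 (Finsupp.single (0:G) 1)) ∘ₗ epsK := by
  apply ext1; intro g
  simp only [LinearMap.comp_apply, LinearMap.sub_apply, LinearMap.id_apply,
    LinearMap.toSpanSingleton_apply, epsK, lmap_single, one_smul]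
  exact CK0 g

lemma CK1' : dK2 ∘ₗ sK1 + sK0 ∘ₗ dK1 = LinearMap.id := by
  apply ext1; intro a
  simpa using CK1 a.1 a.2

lemma CK2' : dK3 ∘ₗ sK2 + sK1 ∘ₗ dK2 = LinearMap.id := by
  apply ext1; intro a
  have := CK2 a.1.1.1 a.1.1.2 a.1.2 a.2
  simpa using this

/-! ### the comparison maps f (bar → Koszul) and g (Koszul → bar) -/

noncomputable def f1 : B1 →ₗ[ℤ] K1 := lmap fun p =>
  trK1 p.1 (sK0 (dB1 (Finsupp.single ((0:G), p.2) 1)))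
noncomputable def f2 : B2 →ₗ[ℤ] K2 := lmap fun p =>
  trK2 p.1 (sK1 (f1 (dB2 (Finsupp.single ((0:G), p.2.1, p.2.2) 1))))
noncomputable def f3 : B3 →ₗ[ℤ] K3 := lmap fun p =>
  trK3 p.1 (sK2 (f2 (dB3 (Finsupp.single ((0:G), p.2.1, p.2.2.1, p.2.2.2) 1))))

noncomputable def g1 : K1 →ₗ[ℤ] B1 := lmap fun p => Finsupp.single (p.2, dd p.1) 1
noncomputable def g2 : K2 →ₗ[ℤ] B2 := lmap fun p =>
  Finsupp.single (p.2, dd p.1.1.1, dd p.1.1.2) 1 - Finsupp.single (p.2, dd p.1.1.2, dd p.1.1.1) 1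
noncomputable def g3 : K3 →ₗ[ℤ] B3 := lmap fun p =>
  Finsupp.single (p.2, dd p.1.1.1, dd p.1.1.2.1, dd p.1.1.2.2) 1
  - Finsupp.single (p.2, dd p.1.1.2.1, dd p.1.1.1, dd p.1.1.2.2) 1
  + Finsupp.single (p.2, dd p.1.1.2.1, dd p.1.1.2.2, dd p.1.1.1) 1
  - Finsupp.single (p.2, dd p.1.1.2.2, dd p.1.1.2.1, dd p.1.1.1) 1
  + Finsupp.single (p.2, dd p.1.1.2.2, dd p.1.1.1, dd p.1.1.2.1) 1
  - Finsupp.single (p.2, dd p.1.1.1, dd p.1.1.2.2, dd p.1.1.2.1) 1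

lemma trf1 (a : G) : f1 ∘ₗ trB1 a = trK1 a ∘ₗ f1 := by
  apply ext1; intro p
  simp only [f1, trB1, LinearMap.comp_apply, lmap_single]
  rw [trtrK1]

lemma trf2 (a : G) : f2 ∘ₗ trB2 a = trK2 a ∘ₗ f2 := by
  apply ext1; intro p
  simp only [f2, trB2, LinearMap.comp_apply, lmap_single]
  rw [trtrK2]

lemma trf3 (a : G) : f3 ∘ₗ trB3 a = trK3 a ∘ₗ f3 := by
  apply ext1; intro p
  simp only [f3, trB3, LinearMap.comp_apply, lmap_single]
  rw [trtrK3]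

lemma trg1 (a : G) : g1 ∘ₗ trK1 a = trB1 a ∘ₗ g1 := by
  apply ext1; intro p
  simp only [g1, trK1, trB1, LinearMap.comp_apply, lmap_single]

lemma trg2 (a : G) : g2 ∘ₗ trK2 a = trB2 a ∘ₗ g2 := by
  apply ext1; intro p
  simp only [g2, trK2, trB2, LinearMap.comp_apply, lmap_single, map_sub]

lemma trg3 (a : G) : g3 ∘ₗ trK3 a = trB3 a ∘ₗ g3 := by
  apply ext1; intro p
  simp only [g3, trK3, trB3, LinearMap.comp_apply, lmap_single, map_sub, map_add]

lemma epsB_dB1 : epsK ∘ₗ dB1 = 0 := by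
  apply ext1; intro p
  simp only [epsK, dB1, LinearMap.comp_apply, lmap_single, map_sub, LinearMap.zero_apply, sub_self]

lemma epsK_dK1 : epsK ∘ₗ dK1 = 0 := by
  apply ext1; intro p
  simp only [epsK, dK1, LinearMap.comp_apply, lmap_single, map_sub, LinearMap.zero_apply, sub_self]

lemma fc1 : dK1 ∘ₗ f1 = dB1 := by
  apply ext1; intro p
  simp only [f1, LinearMap.comp_apply, lmap_single]
  have h1 : dK1 (trK1 p.1 (sK0 (dB1 (Finsupp.single ((0:G), p.2) 1))))
      = tr0 p.1 (dK1 (sK0 (dB1 (Finsupp.single ((0:G), p.2) 1)))) :=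
    DFunLike.congr_fun (trdK1 p.1) _
  rw [h1]
  have hck := DFunLike.congr_fun CK0' (dB1 (Finsupp.single ((0:G), p.2) 1))
  simp only [LinearMap.comp_apply] at hck
  rw [hck]
  have h2 : epsK (dB1 (Finsupp.single ((0:G), p.2) 1)) = 0 := by
    have := DFunLike.congr_fun epsB_dB1 (Finsupp.single ((0:G), p.2) 1)
    simpa using this
  simp only [LinearMap.sub_apply, LinearMap.id_apply, LinearMap.comp_apply, h2,
    LinearMap.toSpanSingleton_apply, zero_smul, sub_zero]
  have e1 : dB1 (Finsupp.single ((0:G), p.2) 1)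
      = Finsupp.single ((0:G) + p.2) 1 - Finsupp.single (0:G) 1 := by
    rw [dB1, lmap_single]
  rw [e1, map_sub]
  simp only [tr0, lmap_single]
  rw [zero_add, add_zero, dB1, lmap_single]

lemma fc2 : dK2 ∘ₗ f2 = f1 ∘ₗ dB2 := by
  apply ext1; intro p
  simp only [f2, LinearMap.comp_apply, lmap_single]
  have h1 : dK2 (trK2 p.1 (sK1 (f1 (dB2 (Finsupp.single ((0:G), p.2.1, p.2.2) 1)))))
      = trK1 p.1 (dK2 (sK1 (f1 (dB2 (Finsupp.single ((0:G), p.2.1, p.2.2) 1))))) :=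
    DFunLike.congr_fun (trdK2 p.1) _
  rw [h1]
  have h2 : dK2 (sK1 (f1 (dB2 (Finsupp.single ((0:G), p.2.1, p.2.2) 1))))
      = f1 (dB2 (Finsupp.single ((0:G), p.2.1, p.2.2) 1))
        - sK0 (dK1 (f1 (dB2 (Finsupp.single ((0:G), p.2.1, p.2.2) 1)))) := by
    have := DFunLike.congr_fun CK1' (f1 (dB2 (Finsupp.single ((0:G), p.2.1, p.2.2) 1)))
    simp only [LinearMap.add_apply, LinearMap.comp_apply, LinearMap.id_apply] at this
    exact eq_sub_of_add_eq this
  have h3 : dK1 (f1 (dB2 (Finsupp.single ((0:G), p.2.1, p.2.2) 1)))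
      = dB1 (dB2 (Finsupp.single ((0:G), p.2.1, p.2.2) 1)) :=
    DFunLike.congr_fun fc1 _
  have h4 : dB1 (dB2 (Finsupp.single ((0:G), p.2.1, p.2.2) 1)) = 0 :=
    DFunLike.congr_fun ddB2 _
  rw [h2, h3, h4, map_zero, sub_zero]
  have h5 : trK1 p.1 (f1 (dB2 (Finsupp.single ((0:G), p.2.1, p.2.2) 1)))
      = f1 (trB1 p.1 (dB2 (Finsupp.single ((0:G), p.2.1, p.2.2) 1))) :=
    (DFunLike.congr_fun (trf1 p.1) _).symm
  rw [h5]
  have h6 : trB1 p.1 (dB2 (Finsupp.single ((0:G), p.2.1, p.2.2) 1))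
      = dB2 (trB2 p.1 (Finsupp.single ((0:G), p.2.1, p.2.2) 1)) :=
    (DFunLike.congr_fun (trdB2 p.1) _).symm
  rw [h6]
  simp only [trB2, lmap_single, add_zero]

lemma fc3 : dK3 ∘ₗ f3 = f2 ∘ₗ dB3 := by
  apply ext1; intro p
  simp only [f3, LinearMap.comp_apply, lmap_single]
  have h1 : dK3 (trK3 p.1 (sK2 (f2 (dB3 (Finsupp.single ((0:G), p.2.1, p.2.2.1, p.2.2.2) 1)))))
      = trK2 p.1 (dK3 (sK2 (f2 (dB3 (Finsupp.single ((0:G), p.2.1, p.2.2.1, p.2.2.2) 1))))) :=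
    DFunLike.congr_fun (trdK3 p.1) _
  rw [h1]
  have h2 : dK3 (sK2 (f2 (dB3 (Finsupp.single ((0:G), p.2.1, p.2.2.1, p.2.2.2) 1))))
      = f2 (dB3 (Finsupp.single ((0:G), p.2.1, p.2.2.1, p.2.2.2) 1))
        - sK1 (dK2 (f2 (dB3 (Finsupp.single ((0:G), p.2.1, p.2.2.1, p.2.2.2) 1)))) := by
    have := DFunLike.congr_fun CK2' (f2 (dB3 (Finsupp.single ((0:G), p.2.1, p.2.2.1, p.2.2.2) 1)))
    simp only [LinearMap.add_apply, LinearMap.comp_apply, LinearMap.id_apply] at this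
    exact eq_sub_of_add_eq this
  have h3 : dK2 (f2 (dB3 (Finsupp.single ((0:G), p.2.1, p.2.2.1, p.2.2.2) 1)))
      = f1 (dB2 (dB3 (Finsupp.single ((0:G), p.2.1, p.2.2.1, p.2.2.2) 1))) :=
    DFunLike.congr_fun fc2 _
  have h4 : dB2 (dB3 (Finsupp.single ((0:G), p.2.1, p.2.2.1, p.2.2.2) 1)) = 0 :=
    DFunLike.congr_fun ddB3 _
  rw [h2, h3, h4, map_zero, map_zero, sub_zero]
  have h5 : trK2 p.1 (f2 (dB3 (Finsupp.single ((0:G), p.2.1, p.2.2.1, p.2.2.2) 1)))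
      = f2 (trB2 p.1 (dB3 (Finsupp.single ((0:G), p.2.1, p.2.2.1, p.2.2.2) 1))) :=
    (DFunLike.congr_fun (trf2 p.1) _).symm
  rw [h5]
  have h6 : trB2 p.1 (dB3 (Finsupp.single ((0:G), p.2.1, p.2.2.1, p.2.2.2) 1))
      = dB3 (trB3 p.1 (Finsupp.single ((0:G), p.2.1, p.2.2.1, p.2.2.2) 1)) :=
    (DFunLike.congr_fun (trdB3 p.1) _).symm
  rw [h6]
  simp only [trB3, lmap_single, add_zero]

lemma gc1 : dB1 ∘ₗ g1 = dK1 := by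
  apply ext1; intro p
  simp only [dB1, g1, dK1, LinearMap.comp_apply, lmap_single]

lemma gc2 : dB2 ∘ₗ g2 = g1 ∘ₗ dK2 := by
  apply ext1; intro p
  simp only [dB2, g2, g1, dK2, LinearMap.comp_apply, lmap_single, map_sub, map_add]
  rw [add_comm (p.2) (dd p.1.1.1), add_comm (p.2) (dd p.1.1.2), add_comm (dd p.1.1.2) (dd p.1.1.1)]
  try abel

lemma gc3 : dB3 ∘ₗ g3 = g2 ∘ₗ dK3 := by
  apply ext1; rintro ⟨⟨⟨i, j, k⟩, hp⟩, γ⟩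
  simp only [dB3, g3, g2, dK3, LinearMap.comp_apply, lmap_single, map_sub, map_add]
  rw [add_comm γ (dd i), add_comm γ (dd j), add_comm γ (dd k),
    add_comm (dd j) (dd i), add_comm (dd k) (dd j), add_comm (dd k) (dd i)]
  try abel

/-! ### the homotopy -/

noncomputable def k1 : B1 →ₗ[ℤ] B1 := LinearMap.id - g1 ∘ₗ f1
noncomputable def h1 : B1 →ₗ[ℤ] B2 := lmap fun p =>
  trB2 p.1 (sB1 (k1 (Finsupp.single ((0:G), p.2) 1)))
noncomputable def k2 : B2 →ₗ[ℤ] B2 := LinearMap.id - g2 ∘ₗ f2 - h1 ∘ₗ dB2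
noncomputable def h2 : B2 →ₗ[ℤ] B3 := lmap fun p =>
  trB3 p.1 (sB2 (k2 (Finsupp.single ((0:G), p.2.1, p.2.2) 1)))
noncomputable def k3 : B3 →ₗ[ℤ] B3 := LinearMap.id - g3 ∘ₗ f3 - h2 ∘ₗ dB3

lemma trtrB2 (a b : G) (x : B2) : trB2 a (trB2 b x) = trB2 (a + b) x := by
  have : trB2 a ∘ₗ trB2 b = trB2 (a + b) := by
    apply ext1; intro p
    simp only [trB2, LinearMap.comp_apply, lmap_single, add_assoc]
  exact DFunLike.congr_fun this x
lemma trtrB3 (a b : G) (x : B3) : trB3 a (trB3 b x) = trB3 (a + b) x := by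
  have : trB3 a ∘ₗ trB3 b = trB3 (a + b) := by
    apply ext1; intro p
    simp only [trB3, LinearMap.comp_apply, lmap_single, add_assoc]
  exact DFunLike.congr_fun this x

lemma trf1e (a : G) (x : B1) : f1 (trB1 a x) = trK1 a (f1 x) := by
  have := DFunLike.congr_fun (trf1 a) x
  simpa using this
lemma trf2e (a : G) (x : B2) : f2 (trB2 a x) = trK2 a (f2 x) := by
  have := DFunLike.congr_fun (trf2 a) x
  simpa using this
lemma trf3e (a : G) (x : B3) : f3 (trB3 a x) = trK3 a (f3 x) := by
  have := DFunLike.congr_fun (trf3 a) x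
  simpa using this
lemma trg1e (a : G) (x : K1) : g1 (trK1 a x) = trB1 a (g1 x) := by
  have := DFunLike.congr_fun (trg1 a) x
  simpa using this
lemma trg2e (a : G) (x : K2) : g2 (trK2 a x) = trB2 a (g2 x) := by
  have := DFunLike.congr_fun (trg2 a) x
  simpa using this
lemma trg3e (a : G) (x : K3) : g3 (trK3 a x) = trB3 a (g3 x) := by
  have := DFunLike.congr_fun (trg3 a) x
  simpa using this
lemma trdB2e (a : G) (x : B2) : dB2 (trB2 a x) = trB1 a (dB2 x) := by
  have := DFunLike.congr_fun (trdB2 a) x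
  simpa using this
lemma trdB3e (a : G) (x : B3) : dB3 (trB3 a x) = trB2 a (dB3 x) := by
  have := DFunLike.congr_fun (trdB3 a) x
  simpa using this
lemma fc1e (x : B1) : dK1 (f1 x) = dB1 x := by
  have := DFunLike.congr_fun fc1 x
  simpa using this
lemma fc2e (x : B2) : dK2 (f2 x) = f1 (dB2 x) := by
  have := DFunLike.congr_fun fc2 x
  simpa using this
lemma fc3e (x : B3) : dK3 (f3 x) = f2 (dB3 x) := by
  have := DFunLike.congr_fun fc3 x
  simpa using this
lemma gc1e (x : K1) : dB1 (g1 x) = dK1 x := by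
  have := DFunLike.congr_fun gc1 x
  simpa using this
lemma gc2e (x : K2) : dB2 (g2 x) = g1 (dK2 x) := by
  have := DFunLike.congr_fun gc2 x
  simpa using this
lemma gc3e (x : K3) : dB3 (g3 x) = g2 (dK3 x) := by
  have := DFunLike.congr_fun gc3 x
  simpa using this
lemma ddB2e (x : B2) : dB1 (dB2 x) = 0 := by
  have := DFunLike.congr_fun ddB2 x
  simpa using this
lemma ddB3e (x : B3) : dB2 (dB3 x) = 0 := by
  have := DFunLike.congr_fun ddB3 x
  simpa using this

lemma k1e (x : B1) : k1 x = x - g1 (f1 x) := by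
  simp [k1]
lemma k2e (x : B2) : k2 x = x - g2 (f2 x) - h1 (dB2 x) := by
  simp [k2]
lemma k3e (x : B3) : k3 x = x - g3 (f3 x) - h2 (dB3 x) := by
  simp [k3]

lemma trk1e (a : G) (x : B1) : k1 (trB1 a x) = trB1 a (k1 x) := by
  rw [k1e, k1e, trf1e, trg1e, map_sub]

lemma trh1e (a : G) (x : B1) : h1 (trB1 a x) = trB2 a (h1 x) := by
  have : h1 ∘ₗ trB1 a = trB2 a ∘ₗ h1 := by
    apply ext1; intro p
    simp only [h1, trB1, LinearMap.comp_apply, lmap_single]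
    rw [trtrB2]
  have := DFunLike.congr_fun this x
  simpa using this

lemma trk2e (a : G) (x : B2) : k2 (trB2 a x) = trB2 a (k2 x) := by
  rw [k2e, k2e, trf2e, trg2e, trdB2e, trh1e, map_sub, map_sub]

lemma trh2e (a : G) (x : B2) : h2 (trB2 a x) = trB3 a (h2 x) := by
  have : h2 ∘ₗ trB2 a = trB3 a ∘ₗ h2 := by
    apply ext1; intro p
    simp only [h2, trB2, LinearMap.comp_apply, lmap_single]
    rw [trtrB3]
  have := DFunLike.congr_fun this x
  simpa using this

lemma dk1e (x : B1) : dB1 (k1 x) = 0 := by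
  rw [k1e, map_sub, gc1e, fc1e, sub_self]

lemma hc1e (x : B1) : dB2 (h1 x) = k1 x := by
  have hmap : dB2 ∘ₗ h1 = k1 := by
    apply ext1; intro p
    simp only [h1, LinearMap.comp_apply, lmap_single]
    rw [trdB2e]
    have h2' : dB2 (sB1 (k1 (Finsupp.single ((0:G), p.2) 1)))
        = k1 (Finsupp.single ((0:G), p.2) 1)
          - sB0 (dB1 (k1 (Finsupp.single ((0:G), p.2) 1))) := by
      have := DFunLike.congr_fun CB1 (k1 (Finsupp.single ((0:G), p.2) 1))
      simp only [LinearMap.add_apply, LinearMap.comp_apply, LinearMap.id_apply] at this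
      exact eq_sub_of_add_eq this
    rw [h2', dk1e, map_zero, sub_zero, ← trk1e]
    simp only [trB1, lmap_single, add_zero]
  have := DFunLike.congr_fun hmap x
  simpa using this

lemma dk2e (x : B2) : dB2 (k2 x) = 0 := by
  rw [k2e, map_sub, map_sub, gc2e, fc2e, hc1e, k1e]
  abel

lemma hc2e (x : B2) : dB3 (h2 x) = k2 x := by
  have hmap : dB3 ∘ₗ h2 = k2 := by
    apply ext1; intro p
    simp only [h2, LinearMap.comp_apply, lmap_single]
    rw [trdB3e]
    have h2' : dB3 (sB2 (k2 (Finsupp.single ((0:G), p.2.1, p.2.2) 1)))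
        = k2 (Finsupp.single ((0:G), p.2.1, p.2.2) 1)
          - sB1 (dB2 (k2 (Finsupp.single ((0:G), p.2.1, p.2.2) 1))) := by
      have := DFunLike.congr_fun CB2 (k2 (Finsupp.single ((0:G), p.2.1, p.2.2) 1))
      simp only [LinearMap.add_apply, LinearMap.comp_apply, LinearMap.id_apply] at this
      exact eq_sub_of_add_eq this
    rw [h2', dk2e, map_zero, sub_zero, ← trk2e]
    simp only [trB2, lmap_single, add_zero]
  have := DFunLike.congr_fun hmap x
  simpa using this

lemma dk3e (x : B3) : dB3 (k3 x) = 0 := by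
  rw [k3e, map_sub, map_sub, gc3e, fc3e, hc2e, k2e, ddB3e, map_zero, sub_zero]
  abel

/-! ### collapse functionals -/

noncomputable def q1 : K1 →ₗ[ℤ] G := lmap fun p => Finsupp.single p.1 1
noncomputable def q2 : K2 →ₗ[ℤ] (T2 →₀ ℤ) := lmap fun p => Finsupp.single p.1 1
noncomputable def q3 : K3 →ₗ[ℤ] (T3 →₀ ℤ) := lmap fun p => Finsupp.single p.1 1
noncomputable def w1 (i : ℕ) : K1 →ₗ[ℤ] G := lmap fun p => p.2 i • Finsupp.single p.1 1
noncomputable def w2 (i : ℕ) : K2 →ₗ[ℤ] (T2 →₀ ℤ) := lmap fun p => p.2 i • Finsupp.single p.1 1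

lemma q1tr (a : G) (z : K1) : q1 (trK1 a z) = q1 z := by
  have : q1 ∘ₗ trK1 a = q1 := by
    apply ext1; intro p; simp only [q1, trK1, LinearMap.comp_apply, lmap_single]
  have := DFunLike.congr_fun this z
  simpa using this

lemma q2tr (a : G) (z : K2) : q2 (trK2 a z) = q2 z := by
  have : q2 ∘ₗ trK2 a = q2 := by
    apply ext1; intro p; simp only [q2, trK2, LinearMap.comp_apply, lmap_single]
  have := DFunLike.congr_fun this z
  simpa using this

lemma q3tr (a : G) (z : K3) : q3 (trK3 a z) = q3 z := by
  have : q3 ∘ₗ trK3 a = q3 := by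
    apply ext1; intro p; simp only [q3, trK3, LinearMap.comp_apply, lmap_single]
  have := DFunLike.congr_fun this z
  simpa using this

lemma w1tr (i : ℕ) (a : G) (z : K1) : w1 i (trK1 a z) = w1 i z + (a i) • q1 z := by
  have : w1 i ∘ₗ trK1 a = w1 i + (a i) • q1 := by
    apply ext1; intro p
    simp only [w1, q1, trK1, LinearMap.comp_apply, lmap_single, LinearMap.add_apply,
      LinearMap.smul_apply, Finsupp.add_apply, add_smul, smul_smul]
    abel
  have := DFunLike.congr_fun this z
  simpa using this

lemma w2tr (i : ℕ) (a : G) (z : K2) : w2 i (trK2 a z) = w2 i z + (a i) • q2 z := by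
  have : w2 i ∘ₗ trK2 a = w2 i + (a i) • q2 := by
    apply ext1; intro p
    simp only [w2, q2, trK2, LinearMap.comp_apply, lmap_single, LinearMap.add_apply,
      LinearMap.smul_apply, Finsupp.add_apply, add_smul, smul_smul]
    abel
  have := DFunLike.congr_fun this z
  simpa using this

lemma q1sK0 (γ : G) : q1 (sK0 (Finsupp.single γ 1)) = γ := by
  rw [sK0, lmap_single, map_sum]
  have step : ∀ i ∈ γ.support,
      q1 (nuSum (γ i) (fun r => Finsupp.single ((i:ℕ), Finsupp.single i r + tl γ i) 1))
        = Finsupp.single i (γ i) := by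
    intro i _
    rw [map_nuSum]
    have : (fun r => q1 (Finsupp.single ((i:ℕ), Finsupp.single i r + tl γ i) 1))
        = fun _ => Finsupp.single i (1:ℤ) := by
      funext r; rw [q1, lmap_single]
    rw [this, nuSum_const, Finsupp.smul_single]
    norm_num
  rw [Finset.sum_congr rfl step]
  exact Finsupp.sum_single γ

lemma w1sK0 {i j : ℕ} (hij : i < j) (γ : G) :
    (w1 i (sK0 (Finsupp.single γ 1))) j = 0 := by
  classical
  rw [sK0, lmap_single, map_sum]
  rw [Finsupp.finset_sum_apply]
  apply Finset.sum_eq_zero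
  intro i' _
  rw [map_nuSum]
  have := map_nuSum (Finsupp.lapply j : G →ₗ[ℤ] ℤ) (γ i')
    (fun r => w1 i (Finsupp.single ((i':ℕ), Finsupp.single i' r + tl γ i') 1))
  simp only [Finsupp.lapply_apply] at this
  rw [this]
  have hz : ∀ r : ℤ, (w1 i (Finsupp.single ((i':ℕ), Finsupp.single i' r + tl γ i') 1)) j = 0 := by
    intro r
    rw [w1, lmap_single]
    simp only
    by_cases h : i' = j
    · subst h
      have hc : ((Finsupp.single i' r + tl γ i') i) = 0 := by
        rw [Finsupp.add_apply, Finsupp.single_apply, if_neg (by omega), tl_apply,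
          if_neg (by omega), add_zero]
      rw [hc, zero_smul, Finsupp.coe_zero, Pi.zero_apply]
    · rw [Finsupp.smul_apply, Finsupp.single_apply, if_neg h, smul_zero]
  rw [nuSum_congr _ _ _ hz, nuSum_const, smul_zero]

lemma w2sK1 {i j k : ℕ} (hij : i < j) (hjk : j < k) (z : K1) :
    (w2 i (sK1 z)) ⟨(j,k), hjk⟩ = 0 := by
  classical
  have hmap : (Finsupp.lapply (⟨(j,k), hjk⟩ : T2) : (T2 →₀ ℤ) →ₗ[ℤ] ℤ) ∘ₗ ((w2 i) ∘ₗ sK1) = 0 := by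
    apply ext1; rintro ⟨k', γ⟩
    simp only [LinearMap.comp_apply, LinearMap.zero_apply, Finsupp.lapply_apply]
    rw [sK1, lmap_single]
    simp only
    rw [map_sum, Finsupp.finset_sum_apply]
    apply Finset.sum_eq_zero
    intro i' _
    by_cases h : i' < k'
    · rw [dif_pos h, map_nuSum]
      have hl := map_nuSum (Finsupp.lapply (⟨(j,k),hjk⟩ : T2) : (T2 →₀ ℤ) →ₗ[ℤ] ℤ) (γ i')
        (fun r => w2 i (Finsupp.single ((⟨(i',k'),h⟩ : T2), Finsupp.single i' r + tl γ i') 1))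
      simp only [Finsupp.lapply_apply] at hl
      rw [hl]
      have hz : ∀ r : ℤ, (w2 i (Finsupp.single ((⟨(i',k'),h⟩ : T2),
          Finsupp.single i' r + tl γ i') 1)) ⟨(j,k),hjk⟩ = 0 := by
        intro r
        rw [w2, lmap_single]
        simp only
        by_cases he : (⟨(i',k'),h⟩ : T2) = ⟨(j,k),hjk⟩
        · have hi'j : i' = j := by
            have := congrArg (fun t : T2 => t.1.1) he
            simpa using this
          subst hi'j
          have hc : ((Finsupp.single i' r + tl γ i') i) = 0 := by
            rw [Finsupp.add_apply, Finsupp.single_apply, if_neg (by omega), tl_apply,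
              if_neg (by omega), add_zero]
          rw [hc, zero_smul, Finsupp.coe_zero, Pi.zero_apply]
        · rw [Finsupp.smul_apply, Finsupp.single_apply, if_neg he, smul_zero]
      rw [nuSum_congr _ _ _ hz, nuSum_const, smul_zero]
    · rw [dif_neg h, map_zero, Finsupp.coe_zero, Pi.zero_apply]
  have := DFunLike.congr_fun hmap z
  simpa using this

lemma q2sK1 {i j : ℕ} (hij : i < j) (z : K1) :
    (q2 (sK1 z)) ⟨(i,j),hij⟩ = (w1 i z) j := by
  classical
  have hmap : (Finsupp.lapply (⟨(i,j), hij⟩ : T2) : (T2 →₀ ℤ) →ₗ[ℤ] ℤ) ∘ₗ (q2 ∘ₗ sK1)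
      = (Finsupp.lapply j : G →ₗ[ℤ] ℤ) ∘ₗ (w1 i) := by
    apply ext1; rintro ⟨j', γ⟩
    simp only [LinearMap.comp_apply, Finsupp.lapply_apply]
    rw [sK1, lmap_single]
    simp only
    rw [map_sum, Finsupp.finset_sum_apply]
    have step : ∀ i' ∈ γ.support,
        (q2 (if h : i' < j' then nuSum (γ i') (fun r =>
            Finsupp.single ((⟨(i', j'), h⟩ : T2), Finsupp.single i' r + tl γ i') 1) else 0))
          ⟨(i,j),hij⟩
        = if i' = i then (if j' = j then γ i' else 0) else 0 := by
      intro i' _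
      by_cases h : i' < j'
      · rw [dif_pos h, map_nuSum]
        have hl := map_nuSum (Finsupp.lapply (⟨(i,j),hij⟩ : T2) : (T2 →₀ ℤ) →ₗ[ℤ] ℤ) (γ i')
          (fun r => q2 (Finsupp.single ((⟨(i',j'),h⟩ : T2), Finsupp.single i' r + tl γ i') 1))
        simp only [Finsupp.lapply_apply] at hl
        rw [hl]
        have hz : ∀ r : ℤ, (q2 (Finsupp.single ((⟨(i',j'),h⟩ : T2),
            Finsupp.single i' r + tl γ i') 1)) ⟨(i,j),hij⟩
            = if (⟨(i',j'),h⟩ : T2) = ⟨(i,j),hij⟩ then 1 else 0 := by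
          intro r
          rw [q2, lmap_single, Finsupp.single_apply]
        rw [nuSum_congr _ _ _ hz, nuSum_const]
        by_cases he : (⟨(i',j'),h⟩ : T2) = ⟨(i,j),hij⟩
        · have h1 : i' = i := by
            have := congrArg (fun t : T2 => t.1.1) he; simpa using this
          have h2 : j' = j := by
            have := congrArg (fun t : T2 => t.1.2) he; simpa using this
          rw [if_pos he, if_pos h1, if_pos h2, smul_eq_mul, mul_one]
        · rw [if_neg he, smul_zero]
          have : ¬ (i' = i ∧ j' = j) := by
            intro hij'
            exact he (by cases hij'.1; cases hij'.2; rfl)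
          by_cases h1 : i' = i
          · rw [if_pos h1, if_neg (fun h2 => this ⟨h1, h2⟩)]
          · rw [if_neg h1]
      · rw [dif_neg h, map_zero, Finsupp.coe_zero, Pi.zero_apply]
        have : ¬ (i' = i ∧ j' = j) := by
          rintro ⟨rfl, rfl⟩; exact h hij
        by_cases h1 : i' = i
        · rw [if_pos h1, if_neg (fun h2 => this ⟨h1, h2⟩)]
        · rw [if_neg h1]
    rw [Finset.sum_congr rfl step, Finset.sum_ite_eq' γ.support i]
    rw [w1, lmap_single]
    simp only
    rw [Finsupp.smul_apply, Finsupp.single_apply]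
    by_cases h1 : i ∈ γ.support
    · rw [if_pos h1]
      by_cases h2 : j' = j
      · rw [if_pos h2, if_pos h2, smul_eq_mul, mul_one]
      · rw [if_neg h2, if_neg h2, smul_zero]
    · rw [if_neg h1, Finsupp.notMem_support_iff.mp h1, zero_smul]
  have := DFunLike.congr_fun hmap z
  simpa using this

lemma q3sK2 {i j k : ℕ} (hij : i < j) (hjk : j < k) (z : K2) :
    (q3 (sK2 z)) ⟨(i,(j,k)), ⟨hij, hjk⟩⟩ = (w2 i z) ⟨(j,k),hjk⟩ := by
  classical
  have hmap : (Finsupp.lapply (⟨(i,(j,k)), ⟨hij, hjk⟩⟩ : T3) : (T3 →₀ ℤ) →ₗ[ℤ] ℤ) ∘ₗ (q3 ∘ₗ sK2)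
      = (Finsupp.lapply (⟨(j,k),hjk⟩ : T2) : (T2 →₀ ℤ) →ₗ[ℤ] ℤ) ∘ₗ (w2 i) := by
    apply ext1; rintro ⟨τ', γ⟩
    obtain ⟨⟨j', k'⟩, h'⟩ := τ'
    simp only [LinearMap.comp_apply, Finsupp.lapply_apply]
    rw [sK2, lmap_single]
    simp only
    rw [map_sum, Finsupp.finset_sum_apply]
    have step : ∀ i' ∈ γ.support,
        (q3 (if h : i' < j' then nuSum (γ i') (fun r =>
            Finsupp.single ((⟨(i', (j',k')), ⟨h, h'⟩⟩ : T3), Finsupp.single i' r + tl γ i') 1) else 0))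
          ⟨(i,(j,k)), ⟨hij, hjk⟩⟩
        = if i' = i then (if (⟨(j',k'),h'⟩ : T2) = ⟨(j,k),hjk⟩ then γ i' else 0) else 0 := by
      intro i' _
      by_cases h : i' < j'
      · rw [dif_pos h, map_nuSum]
        have hl := map_nuSum
          (Finsupp.lapply (⟨(i,(j,k)), ⟨hij, hjk⟩⟩ : T3) : (T3 →₀ ℤ) →ₗ[ℤ] ℤ) (γ i')
          (fun r => q3 (Finsupp.single ((⟨(i',(j',k')),⟨h,h'⟩⟩ : T3),
            Finsupp.single i' r + tl γ i') 1))
        simp only [Finsupp.lapply_apply] at hl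
        rw [hl]
        have hz : ∀ r : ℤ, (q3 (Finsupp.single ((⟨(i',(j',k')),⟨h,h'⟩⟩ : T3),
            Finsupp.single i' r + tl γ i') 1)) ⟨(i,(j,k)), ⟨hij, hjk⟩⟩
            = if (⟨(i',(j',k')),⟨h,h'⟩⟩ : T3) = ⟨(i,(j,k)), ⟨hij, hjk⟩⟩ then 1 else 0 := by
          intro r
          rw [q3, lmap_single, Finsupp.single_apply]
        rw [nuSum_congr _ _ _ hz, nuSum_const]
        by_cases he : (⟨(i',(j',k')),⟨h,h'⟩⟩ : T3) = ⟨(i,(j,k)), ⟨hij, hjk⟩⟩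
        · have h1 : i' = i := by
            have := congrArg (fun t : T3 => t.1.1) he; simpa using this
          have h2 : j' = j := by
            have := congrArg (fun t : T3 => t.1.2.1) he; simpa using this
          have h3 : k' = k := by
            have := congrArg (fun t : T3 => t.1.2.2) he; simpa using this
          subst h1; subst h2; subst h3
          rw [if_pos he, if_pos rfl, if_pos rfl, smul_eq_mul, mul_one]
        · rw [if_neg he, smul_zero]
          by_cases h1 : i' = i
          · rw [if_pos h1]
            by_cases h2 : (⟨(j',k'),h'⟩ : T2) = ⟨(j,k),hjk⟩
            · exfalso
              apply he
              have hj : j' = j := by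
                have := congrArg (fun t : T2 => t.1.1) h2; simpa using this
              have hk : k' = k := by
                have := congrArg (fun t : T2 => t.1.2) h2; simpa using this
              subst h1; subst hj; subst hk; rfl
            · rw [if_neg h2]
          · rw [if_neg h1]
      · rw [dif_neg h, map_zero, Finsupp.coe_zero, Pi.zero_apply]
        by_cases h1 : i' = i
        · rw [if_pos h1]
          by_cases h2 : (⟨(j',k'),h'⟩ : T2) = ⟨(j,k),hjk⟩
          · exfalso
            have hj : j' = j := by
              have := congrArg (fun t : T2 => t.1.1) h2; simpa using this
            subst h1; subst hj
            exact h hij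
          · rw [if_neg h2]
        · rw [if_neg h1]
    rw [Finset.sum_congr rfl step, Finset.sum_ite_eq' γ.support i]
    rw [w2, lmap_single]
    simp only
    rw [Finsupp.smul_apply, Finsupp.single_apply]
    by_cases h1 : i ∈ γ.support
    · rw [if_pos h1]
      by_cases h2 : (⟨(j',k'),h'⟩ : T2) = ⟨(j,k),hjk⟩
      · rw [if_pos h2, if_pos h2, smul_eq_mul, mul_one]
      · rw [if_neg h2, if_neg h2, smul_zero]
    · rw [if_neg h1, Finsupp.notMem_support_iff.mp h1, zero_smul]
  have := DFunLike.congr_fun hmap z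
  simpa using this

lemma sK0_zero : sK0 (Finsupp.single (0:G) 1) = 0 := by
  rw [sK0, lmap_single]
  simp

lemma W1 (γ₀ x : G) {i j : ℕ} (hij : i < j) :
    (w1 i (f1 (Finsupp.single (γ₀, x) 1))) j = γ₀ i * x j := by
  rw [f1, lmap_single]
  simp only
  have e1 : dB1 (Finsupp.single ((0:G), x) 1)
      = Finsupp.single x 1 - Finsupp.single (0:G) 1 := by
    rw [dB1, lmap_single]
    simp only
    rw [zero_add]
  rw [e1, map_sub, sK0_zero, sub_zero, w1tr]
  rw [Finsupp.add_apply, Finsupp.smul_apply, w1sK0 hij, q1sK0, zero_add, smul_eq_mul]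

lemma ZW (x y : G) {j k : ℕ} (hjk : j < k) :
    (w1 j (f1 (dB2 (Finsupp.single ((0:G), x, y) 1)))) k = x j * y k := by
  have e2 : dB2 (Finsupp.single ((0:G), x, y) 1)
      = Finsupp.single (x, y) 1 - Finsupp.single ((0:G), x + y) 1
        + Finsupp.single ((0:G), x) 1 := by
    rw [dB2, lmap_single]
    simp only
    rw [zero_add]
  rw [e2, map_add, map_sub, map_add, map_sub]
  rw [Finsupp.add_apply, Finsupp.sub_apply]
  rw [W1 x y hjk, W1 (0:G) (x+y) hjk, W1 (0:G) x hjk]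
  simp

lemma Q2e (γ₀ x y : G) {j k : ℕ} (hjk : j < k) :
    (q2 (f2 (Finsupp.single (γ₀, x, y) 1))) ⟨(j,k),hjk⟩ = x j * y k := by
  rw [f2, lmap_single]
  simp only
  rw [q2tr, q2sK1 hjk, ZW x y hjk]

lemma W2e (γ₀ x y : G) {i j k : ℕ} (hij : i < j) (hjk : j < k) :
    (w2 i (f2 (Finsupp.single (γ₀, x, y) 1))) ⟨(j,k),hjk⟩ = γ₀ i * (x j * y k) := by
  rw [f2, lmap_single]
  simp only
  rw [w2tr, Finsupp.add_apply, Finsupp.smul_apply, w2sK1 hij hjk, q2sK1 hjk, ZW x y hjk,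
    zero_add, smul_eq_mul]

lemma F3e (γ₀ g h l : G) {i j k : ℕ} (hij : i < j) (hjk : j < k) :
    (q3 (f3 (Finsupp.single (γ₀, g, h, l) 1))) ⟨(i,(j,k)),⟨hij,hjk⟩⟩ = g i * h j * l k := by
  rw [f3, lmap_single]
  simp only
  rw [q3tr, q3sK2 hij hjk]
  have e3 : dB3 (Finsupp.single ((0:G), g, h, l) 1)
      = Finsupp.single (g, h, l) 1 - Finsupp.single ((0:G), g + h, l) 1
        + Finsupp.single ((0:G), g, h + l) 1 - Finsupp.single ((0:G), g, h) 1 := by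
    rw [dB3, lmap_single]
    simp only
    rw [zero_add]
  rw [e3, map_sub, map_add, map_sub, map_sub, map_add, map_sub]
  rw [Finsupp.sub_apply, Finsupp.add_apply, Finsupp.sub_apply]
  rw [W2e g h l hij hjk, W2e (0:G) (g+h) l hij hjk, W2e (0:G) g (h+l) hij hjk,
    W2e (0:G) g h hij hjk]
  simp [mul_assoc]

/-! ### from a 3-cocycle to its normal form plus coboundary -/

section Cocycle
variable {T : Type*} [AddCommGroup T]

noncomputable def ctil (c : G → G → G → T) : B3 →ₗ[ℤ] T :=
  lmap fun p => c p.2.1 p.2.2.1 p.2.2.2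

lemma ctil_tr (c : G → G → G → T) (a : G) (x : B3) : ctil c (trB3 a x) = ctil c x := by
  have : ctil c ∘ₗ trB3 a = ctil c := by
    apply ext1; intro p
    simp only [ctil, trB3, LinearMap.comp_apply, lmap_single]
  have := DFunLike.congr_fun this x
  simpa using this

lemma ctil_d4 (c : G → G → G → T)
    (hc : ∀ g1 g2 g3 g4 : G, c g2 g3 g4 - c (g1+g2) g3 g4 + c g1 (g2+g3) g4
      - c g1 g2 (g3+g4) + c g1 g2 g3 = 0) (x : B4) : ctil c (dB4 x) = 0 := by
  have : ctil c ∘ₗ dB4 = 0 := by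
    apply ext1; intro p
    simp only [ctil, dB4, LinearMap.comp_apply, lmap_single, map_sub, map_add,
      LinearMap.zero_apply]
    have h5 := hc p.2.1 p.2.2.1 p.2.2.2.1 p.2.2.2.2
    abel_nf at h5 ⊢
    exact h5
  have := DFunLike.congr_fun this x
  simpa using this

noncomputable def AA (c : G → G → G → T) : T3 → T := fun τ =>
  c (dd τ.1.1) (dd τ.1.2.1) (dd τ.1.2.2) - c (dd τ.1.2.1) (dd τ.1.1) (dd τ.1.2.2)
  + c (dd τ.1.2.1) (dd τ.1.2.2) (dd τ.1.1) - c (dd τ.1.2.2) (dd τ.1.2.1) (dd τ.1.1)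
  + c (dd τ.1.2.2) (dd τ.1.1) (dd τ.1.2.1) - c (dd τ.1.1) (dd τ.1.2.2) (dd τ.1.2.1)

noncomputable def pairAA (c : G → G → G → T) : (T3 →₀ ℤ) →ₗ[ℤ] T := lmap (AA c)

lemma ctil_g3 (c : G → G → G → T) (z : K3) : ctil c (g3 z) = pairAA c (q3 z) := by
  have : ctil c ∘ₗ g3 = pairAA c ∘ₗ q3 := by
    apply ext1; intro p
    simp only [ctil, g3, q3, pairAA, AA, LinearMap.comp_apply, lmap_single, map_sub, map_add]
  have := DFunLike.congr_fun this z
  simpa using this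

noncomputable def bet (c : G → G → G → T) : G → G → T := fun g h =>
  ctil c (h2 (Finsupp.single ((0:G), g, h) 1))

lemma bet_eval (c : G → G → G → T) (a u v : G) :
    ctil c (h2 (Finsupp.single (a, u, v) 1)) = bet c u v := by
  rw [bet, h2, lmap_single, lmap_single]
  simp only
  rw [ctil_tr, ctil_tr]

theorem modA (c : G → G → G → T)
    (hc : ∀ g1 g2 g3 g4 : G, c g2 g3 g4 - c (g1+g2) g3 g4 + c g1 (g2+g3) g4
      - c g1 g2 (g3+g4) + c g1 g2 g3 = 0) (g h l : G) :
    c g h l = pairAA c (q3 (f3 (Finsupp.single ((0:G), g, h, l) 1)))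
      + (bet c h l - bet c (g+h) l + bet c g (h+l) - bet c g h) := by
  set x : B3 := Finsupp.single ((0:G), g, h, l) 1 with hx
  have h0 : ctil c x = c g h l := by rw [hx, ctil, lmap_single]
  have hk3 : x = g3 (f3 x) + h2 (dB3 x) + k3 x := by rw [k3e]; abel
  have hck3 : ctil c (k3 x) = 0 := by
    have hdecomp := DFunLike.congr_fun CB3 (k3 x)
    simp only [LinearMap.add_apply, LinearMap.comp_apply, LinearMap.id_apply] at hdecomp
    rw [dk3e, map_zero, add_zero] at hdecomp
    rw [← hdecomp]
    exact ctil_d4 c hc _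
  have e3 : dB3 x = Finsupp.single (g, h, l) 1 - Finsupp.single ((0:G), g + h, l) 1
      + Finsupp.single ((0:G), g, h + l) 1 - Finsupp.single ((0:G), g, h) 1 := by
    rw [hx, dB3, lmap_single]
    simp only
    rw [zero_add]
  have hd3 : ctil c (h2 (dB3 x)) = bet c h l - bet c (g+h) l + bet c g (h+l) - bet c g h := by
    rw [e3, map_sub, map_add, map_sub, map_sub, map_add, map_sub]
    rw [bet_eval, bet_eval, bet_eval, bet_eval]
  calc c g h l = ctil c x := h0.symm
    _ = ctil c (g3 (f3 x)) + ctil c (h2 (dB3 x)) + ctil c (k3 x) := by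
        conv_lhs => rw [hk3]
        rw [map_add, map_add]
    _ = pairAA c (q3 (f3 x)) + (bet c h l - bet c (g+h) l + bet c g (h+l) - bet c g h) := by
        rw [hck3, add_zero, ctil_g3, hd3]

theorem modA' (c : G → G → G → T)
    (hc : ∀ g1 g2 g3 g4 : G, c g2 g3 g4 - c (g1+g2) g3 g4 + c g1 (g2+g3) g4
      - c g1 g2 (g3+g4) + c g1 g2 g3 = 0) (g h l : G) :
    c g h l = (∑ᶠ τ : T3, (g τ.1.1 * h τ.1.2.1 * l τ.1.2.2) • AA c τ)
      + (bet c h l - bet c (g+h) l + bet c g (h+l) - bet c g h) := by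
  rw [modA c hc g h l]
  congr 1
  set w : T3 →₀ ℤ := q3 (f3 (Finsupp.single ((0:G), g, h, l) 1)) with hw
  have hwτ : ∀ τ : T3, w τ = g τ.1.1 * h τ.1.2.1 * l τ.1.2.2 := by
    rintro ⟨⟨i, j, k⟩, hij, hjk⟩
    exact F3e (0:G) g h l hij hjk
  have hpair : pairAA c w = ∑ τ ∈ w.support, (w τ) • AA c τ := by
    rw [pairAA, lmap, Finsupp.lift_apply]
    rfl
  rw [hpair]
  have hsupp : (Function.support fun τ : T3 => (g τ.1.1 * h τ.1.2.1 * l τ.1.2.2) • AA c τ)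
      ⊆ ↑w.support := by
    intro τ hτ
    simp only [Function.mem_support] at hτ
    simp only [Finset.coe_sort_coe, Finset.mem_coe, Finsupp.mem_support_iff, hwτ τ]
    intro h0
    exact hτ (by rw [h0, zero_smul])
  rw [finsum_eq_sum_of_support_subset _ hsupp]
  apply Finset.sum_congr rfl
  intro τ _
  rw [hwτ τ]

end Cocycle

end S15

section Assembly
open S15

lemma Hmul_snd (x y : UT × FreeAb) : (Hmul x y).2 = x.2 + y.2 := rfl

lemma entryM_Hmul (y z : UT × FreeAb) {j k : ℕ} (h : j < k) :
    entryM (Hmul y z) j k = entryM y j k + entryM z j k + y.2 j * z.2 k := by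
  simp only [entryM, dif_pos h, Hmul, Finsupp.add_apply]
  congr 1

/-- bound set for the relevant indices -/
noncomputable def PP (x y z : UT × FreeAb) : Finset ℕ :=
  x.2.support ∪ y.2.support ∪ z.2.support
    ∪ y.1.support.image (fun q => q.1.1) ∪ y.1.support.image (fun q => q.1.2)
    ∪ z.1.support.image (fun q => q.1.1) ∪ z.1.support.image (fun q => q.1.2)

lemma mem_PP_x2 {x y z : UT × FreeAb} {i : ℕ} (h : x.2 i ≠ 0) : i ∈ PP x y z := by
  simp only [PP, Finset.mem_union]
  exact Or.inl (Or.inl (Or.inl (Or.inl (Or.inl (Or.inl (Finsupp.mem_support_iff.mpr h))))))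

lemma mem_PP_y2 {x y z : UT × FreeAb} {i : ℕ} (h : y.2 i ≠ 0) : i ∈ PP x y z := by
  simp only [PP, Finset.mem_union]
  exact Or.inl (Or.inl (Or.inl (Or.inl (Or.inl (Or.inr (Finsupp.mem_support_iff.mpr h))))))

lemma mem_PP_z2 {x y z : UT × FreeAb} {i : ℕ} (h : z.2 i ≠ 0) : i ∈ PP x y z := by
  simp only [PP, Finset.mem_union]
  exact Or.inl (Or.inl (Or.inl (Or.inl (Or.inr (Finsupp.mem_support_iff.mpr h)))))

lemma mem_PP_xy2 {x y z : UT × FreeAb} {i : ℕ} (h : (x.2 + y.2) i ≠ 0) : i ∈ PP x y z := by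
  rw [Finsupp.add_apply] at h
  by_cases h1 : x.2 i ≠ 0
  · exact mem_PP_x2 h1
  push_neg at h1
  rw [h1, zero_add] at h
  exact mem_PP_y2 h

lemma mem_PP_ey {x y z : UT × FreeAb} {j k : ℕ} (hjk : j < k) (h : entryM y j k ≠ 0) :
    j ∈ PP x y z ∧ k ∈ PP x y z := by
  rw [entryM, dif_pos hjk] at h
  have hmem : (⟨(j,k),hjk⟩ : UTIdx) ∈ y.1.support := Finsupp.mem_support_iff.mpr h
  constructor
  · simp only [PP, Finset.mem_union]
    exact Or.inl (Or.inl (Or.inl (Or.inr (Finset.mem_image.mpr ⟨_, hmem, rfl⟩))))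
  · simp only [PP, Finset.mem_union]
    exact Or.inl (Or.inl (Or.inr (Finset.mem_image.mpr ⟨_, hmem, rfl⟩)))

lemma mem_PP_ez {x y z : UT × FreeAb} {j k : ℕ} (hjk : j < k) (h : entryM z j k ≠ 0) :
    j ∈ PP x y z ∧ k ∈ PP x y z := by
  rw [entryM, dif_pos hjk] at h
  have hmem : (⟨(j,k),hjk⟩ : UTIdx) ∈ z.1.support := Finsupp.mem_support_iff.mpr h
  constructor
  · simp only [PP, Finset.mem_union]
    exact Or.inl (Or.inr (Finset.mem_image.mpr ⟨_, hmem, rfl⟩))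
  · simp only [PP, Finset.mem_union]
    exact Or.inr (Finset.mem_image.mpr ⟨_, hmem, rfl⟩)

lemma mem_PP_eyz {x y z : UT × FreeAb} {j k : ℕ} (hjk : j < k)
    (h : entryM (Hmul y z) j k ≠ 0) : j ∈ PP x y z ∧ k ∈ PP x y z := by
  rw [entryM_Hmul y z hjk] at h
  by_cases h1 : entryM y j k ≠ 0
  · exact mem_PP_ey hjk h1
  by_cases h2 : entryM z j k ≠ 0
  · exact mem_PP_ez hjk h2
  push_neg at h1 h2
  rw [h1, h2, zero_add, zero_add] at h
  exact ⟨mem_PP_y2 (fun h0 => h (by rw [h0, zero_mul])),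
    mem_PP_z2 (fun h0 => h (by rw [h0, mul_zero]))⟩

theorem part1 (c : FreeAb → FreeAb → FreeAb → AddCircle (1 : ℝ))
    (hc : ∀ g₁ g₂ g₃ g₄ : FreeAb,
        c g₂ g₃ g₄ - c (g₁ + g₂) g₃ g₄ + c g₁ (g₂ + g₃) g₄
          - c g₁ g₂ (g₃ + g₄) + c g₁ g₂ g₃ = 0) :
    ∃ b : (UT × FreeAb) → (UT × FreeAb) → AddCircle (1 : ℝ),
      ∀ x y z : UT × FreeAb,
        c x.2 y.2 z.2 = b y z - b (Hmul x y) z + b x (Hmul y z) - b x y := by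
  classical
  refine ⟨fun x y =>
    (∑ᶠ τ : S15.T3, (x.2 τ.1.1 * entryM y τ.1.2.1 τ.1.2.2) • S15.AA c τ)
      + S15.bet c x.2 y.2, ?_⟩
  intro x y z
  have hmod := S15.modA' c hc x.2 y.2 z.2
  simp only [Hmul_snd]
  set S : Finset S15.T3 :=
    Finset.subtype _ ((PP x y z) ×ˢ ((PP x y z) ×ˢ (PP x y z))) with hS
  have hmemS : ∀ τ : S15.T3, τ.1.1 ∈ PP x y z → τ.1.2.1 ∈ PP x y z →
      τ.1.2.2 ∈ PP x y z → τ ∈ S := by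
    intro τ h1 h2 h3
    simp only [hS, Finset.mem_subtype, Finset.mem_product]
    exact ⟨h1, h2, h3⟩
  have hne2 : ∀ {m n : ℤ} {t : AddCircle (1:ℝ)}, (m * n) • t ≠ 0 → m ≠ 0 ∧ n ≠ 0 := by
    intro m n t h
    constructor
    · intro h0; exact h (by rw [h0, zero_mul, zero_smul])
    · intro h0; exact h (by rw [h0, mul_zero, zero_smul])
  have hne3 : ∀ {m n p : ℤ} {t : AddCircle (1:ℝ)},
      (m * n * p) • t ≠ 0 → m ≠ 0 ∧ n ≠ 0 ∧ p ≠ 0 := by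
    intro m n p t h
    refine ⟨?_, ?_, ?_⟩ <;> intro h0 <;> apply h <;> rw [h0]
    · rw [zero_mul, zero_mul, zero_smul]
    · rw [mul_zero, zero_mul, zero_smul]
    · rw [mul_zero, zero_smul]
  have conv0 : (∑ᶠ τ : S15.T3, (x.2 τ.1.1 * y.2 τ.1.2.1 * z.2 τ.1.2.2) • S15.AA c τ)
      = ∑ τ ∈ S, (x.2 τ.1.1 * y.2 τ.1.2.1 * z.2 τ.1.2.2) • S15.AA c τ := by
    apply finsum_eq_sum_of_support_subset
    intro τ hτ
    rw [Function.mem_support] at hτ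
    obtain ⟨h1, h2, h3⟩ := hne3 hτ
    exact hmemS τ (mem_PP_x2 h1) (mem_PP_y2 h2) (mem_PP_z2 h3)
  have conv1 : (∑ᶠ τ : S15.T3, (y.2 τ.1.1 * entryM z τ.1.2.1 τ.1.2.2) • S15.AA c τ)
      = ∑ τ ∈ S, (y.2 τ.1.1 * entryM z τ.1.2.1 τ.1.2.2) • S15.AA c τ := by
    apply finsum_eq_sum_of_support_subset
    rintro ⟨⟨i,j,k⟩,hij,hjk⟩ hτ
    rw [Function.mem_support] at hτ
    obtain ⟨h1, h2⟩ := hne2 hτ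
    exact hmemS _ (mem_PP_y2 h1) (mem_PP_ez hjk h2).1 (mem_PP_ez hjk h2).2
  have conv2 : (∑ᶠ τ : S15.T3, ((x.2 + y.2) τ.1.1 * entryM z τ.1.2.1 τ.1.2.2) • S15.AA c τ)
      = ∑ τ ∈ S, ((x.2 + y.2) τ.1.1 * entryM z τ.1.2.1 τ.1.2.2) • S15.AA c τ := by
    apply finsum_eq_sum_of_support_subset
    rintro ⟨⟨i,j,k⟩,hij,hjk⟩ hτ
    rw [Function.mem_support] at hτ
    obtain ⟨h1, h2⟩ := hne2 hτ
    exact hmemS _ (mem_PP_xy2 h1) (mem_PP_ez hjk h2).1 (mem_PP_ez hjk h2).2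
  have conv3 : (∑ᶠ τ : S15.T3,
        (x.2 τ.1.1 * entryM (Hmul y z) τ.1.2.1 τ.1.2.2) • S15.AA c τ)
      = ∑ τ ∈ S, (x.2 τ.1.1 * entryM (Hmul y z) τ.1.2.1 τ.1.2.2) • S15.AA c τ := by
    apply finsum_eq_sum_of_support_subset
    rintro ⟨⟨i,j,k⟩,hij,hjk⟩ hτ
    rw [Function.mem_support] at hτ
    obtain ⟨h1, h2⟩ := hne2 hτ
    exact hmemS _ (mem_PP_x2 h1) (mem_PP_eyz hjk h2).1 (mem_PP_eyz hjk h2).2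
  have conv4 : (∑ᶠ τ : S15.T3, (x.2 τ.1.1 * entryM y τ.1.2.1 τ.1.2.2) • S15.AA c τ)
      = ∑ τ ∈ S, (x.2 τ.1.1 * entryM y τ.1.2.1 τ.1.2.2) • S15.AA c τ := by
    apply finsum_eq_sum_of_support_subset
    rintro ⟨⟨i,j,k⟩,hij,hjk⟩ hτ
    rw [Function.mem_support] at hτ
    obtain ⟨h1, h2⟩ := hne2 hτ
    exact hmemS _ (mem_PP_x2 h1) (mem_PP_ey hjk h2).1 (mem_PP_ey hjk h2).2
  have hSig : (∑ᶠ τ : S15.T3, (y.2 τ.1.1 * entryM z τ.1.2.1 τ.1.2.2) • S15.AA c τ)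
      - (∑ᶠ τ : S15.T3, ((x.2 + y.2) τ.1.1 * entryM z τ.1.2.1 τ.1.2.2) • S15.AA c τ)
      + (∑ᶠ τ : S15.T3, (x.2 τ.1.1 * entryM (Hmul y z) τ.1.2.1 τ.1.2.2) • S15.AA c τ)
      - (∑ᶠ τ : S15.T3, (x.2 τ.1.1 * entryM y τ.1.2.1 τ.1.2.2) • S15.AA c τ)
      = ∑ᶠ τ : S15.T3, (x.2 τ.1.1 * y.2 τ.1.2.1 * z.2 τ.1.2.2) • S15.AA c τ := by
    rw [conv0, conv1, conv2, conv3, conv4,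
      ← Finset.sum_sub_distrib, ← Finset.sum_add_distrib, ← Finset.sum_sub_distrib]
    apply Finset.sum_congr rfl
    rintro ⟨⟨i,j,k⟩,hij,hjk⟩ _
    dsimp only
    rw [entryM_Hmul y z hjk, Finsupp.add_apply, ← sub_smul, ← add_smul, ← sub_smul]
    congr 1
    ring
  rw [hmod, ← hSig]
  abel

end Assembly

/-- Every third cocycle of `G = ℤ^{<ℕ}` becomes a coboundary after pullback along
`π₀ : H → G`, i.e. `π₀^*(Z³(G,T)) ⊆ B³(H,T)`; in particular `π₀^*(c_a) = ∂_H b_a`. -/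
theorem stmt_15 :
    (∀ c : FreeAb → FreeAb → FreeAb → AddCircle (1 : ℝ),
      (∀ g₁ g₂ g₃ g₄ : FreeAb,
          c g₂ g₃ g₄ - c (g₁ + g₂) g₃ g₄ + c g₁ (g₂ + g₃) g₄
            - c g₁ g₂ (g₃ + g₄) + c g₁ g₂ g₃ = 0) →
      ∃ b : (UT × FreeAb) → (UT × FreeAb) → AddCircle (1 : ℝ),
        ∀ x y z : UT × FreeAb,
          c x.2 y.2 z.2 = b y z - b (Hmul x y) z + b x (Hmul y z) - b x y) ∧
    (∀ (a : ℕ → ℕ → ℕ → ℝ) (x y z : UT × FreeAb),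
        ca a x.2 y.2 z.2 =
          ba a y z - ba a (Hmul x y) z + ba a x (Hmul y z) - ba a x y) := by
  classical
  constructor
  · exact part1
  · -- Part 2
    intro a x y z
    simp only [ca, ba, Hmul_snd]
    rw [← QuotientAddGroup.mk_sub, ← QuotientAddGroup.mk_add, ← QuotientAddGroup.mk_sub]
    apply congrArg
    set S : Finset (ℕ × ℕ × ℕ) := (PP x y z) ×ˢ ((PP x y z) ×ˢ (PP x y z)) with hS
    have hmemS : ∀ p : ℕ × ℕ × ℕ, p.1 ∈ PP x y z → p.2.1 ∈ PP x y z →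
        p.2.2 ∈ PP x y z → p ∈ S := by
      intro p h1 h2 h3
      simp only [hS, Finset.mem_product]
      exact ⟨h1, h2, h3⟩
    have hne : ∀ {A u v : ℝ}, A * u * v ≠ 0 → u ≠ 0 ∧ v ≠ 0 := by
      intro A u v h
      constructor
      · intro h0; exact h (by rw [h0, mul_zero, zero_mul])
      · intro h0; exact h (by rw [h0, mul_zero])
    have hne3 : ∀ {A u v w : ℝ}, A * u * v * w ≠ 0 → u ≠ 0 ∧ v ≠ 0 ∧ w ≠ 0 := by
      intro A u v w h
      refine ⟨?_, ?_, ?_⟩ <;> intro h0 <;> apply h <;> rw [h0]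
      · rw [mul_zero, zero_mul, zero_mul]
      · rw [mul_zero, zero_mul]
      · rw [mul_zero]
    have conv0 : (∑ᶠ p : ℕ × ℕ × ℕ,
          if p.1 < p.2.1 ∧ p.2.1 < p.2.2 then
            a p.1 p.2.1 p.2.2 * (x.2 p.1 : ℝ) * (y.2 p.2.1 : ℝ) * (z.2 p.2.2 : ℝ) else 0)
        = ∑ p ∈ S, (if p.1 < p.2.1 ∧ p.2.1 < p.2.2 then
            a p.1 p.2.1 p.2.2 * (x.2 p.1 : ℝ) * (y.2 p.2.1 : ℝ) * (z.2 p.2.2 : ℝ) else 0) := by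
      apply finsum_eq_sum_of_support_subset
      intro p hp
      rw [Function.mem_support] at hp
      by_cases hcond : p.1 < p.2.1 ∧ p.2.1 < p.2.2
      · rw [if_pos hcond] at hp
        obtain ⟨h1, h2, h3⟩ := hne3 hp
        rw [Int.cast_ne_zero] at h1 h2 h3
        exact hmemS p (mem_PP_x2 h1) (mem_PP_y2 h2) (mem_PP_z2 h3)
      · rw [if_neg hcond] at hp
        exact absurd rfl hp
    have conv1 : (∑ᶠ p : ℕ × ℕ × ℕ,
          if p.1 < p.2.1 ∧ p.2.1 < p.2.2 then
            a p.1 p.2.1 p.2.2 * (y.2 p.1 : ℝ) * (entryM z p.2.1 p.2.2 : ℝ) else 0)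
        = ∑ p ∈ S, (if p.1 < p.2.1 ∧ p.2.1 < p.2.2 then
            a p.1 p.2.1 p.2.2 * (y.2 p.1 : ℝ) * (entryM z p.2.1 p.2.2 : ℝ) else 0) := by
      apply finsum_eq_sum_of_support_subset
      intro p hp
      rw [Function.mem_support] at hp
      by_cases hcond : p.1 < p.2.1 ∧ p.2.1 < p.2.2
      · rw [if_pos hcond] at hp
        obtain ⟨h1, h2⟩ := hne hp
        rw [Int.cast_ne_zero] at h1 h2
        exact hmemS p (mem_PP_y2 h1) (mem_PP_ez hcond.2 h2).1 (mem_PP_ez hcond.2 h2).2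
      · rw [if_neg hcond] at hp
        exact absurd rfl hp
    have conv2 : (∑ᶠ p : ℕ × ℕ × ℕ,
          if p.1 < p.2.1 ∧ p.2.1 < p.2.2 then
            a p.1 p.2.1 p.2.2 * ((x.2 + y.2) p.1 : ℝ) * (entryM z p.2.1 p.2.2 : ℝ) else 0)
        = ∑ p ∈ S, (if p.1 < p.2.1 ∧ p.2.1 < p.2.2 then
            a p.1 p.2.1 p.2.2 * ((x.2 + y.2) p.1 : ℝ) * (entryM z p.2.1 p.2.2 : ℝ) else 0) := by
      apply finsum_eq_sum_of_support_subset
      intro p hp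
      rw [Function.mem_support] at hp
      by_cases hcond : p.1 < p.2.1 ∧ p.2.1 < p.2.2
      · rw [if_pos hcond] at hp
        obtain ⟨h1, h2⟩ := hne hp
        rw [Int.cast_ne_zero] at h1 h2
        exact hmemS p (mem_PP_xy2 h1) (mem_PP_ez hcond.2 h2).1 (mem_PP_ez hcond.2 h2).2
      · rw [if_neg hcond] at hp
        exact absurd rfl hp
    have conv3 : (∑ᶠ p : ℕ × ℕ × ℕ,
          if p.1 < p.2.1 ∧ p.2.1 < p.2.2 then
            a p.1 p.2.1 p.2.2 * (x.2 p.1 : ℝ) * (entryM (Hmul y z) p.2.1 p.2.2 : ℝ) else 0)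
        = ∑ p ∈ S, (if p.1 < p.2.1 ∧ p.2.1 < p.2.2 then
            a p.1 p.2.1 p.2.2 * (x.2 p.1 : ℝ) * (entryM (Hmul y z) p.2.1 p.2.2 : ℝ) else 0) := by
      apply finsum_eq_sum_of_support_subset
      intro p hp
      rw [Function.mem_support] at hp
      by_cases hcond : p.1 < p.2.1 ∧ p.2.1 < p.2.2
      · rw [if_pos hcond] at hp
        obtain ⟨h1, h2⟩ := hne hp
        rw [Int.cast_ne_zero] at h1 h2
        exact hmemS p (mem_PP_x2 h1) (mem_PP_eyz hcond.2 h2).1 (mem_PP_eyz hcond.2 h2).2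
      · rw [if_neg hcond] at hp
        exact absurd rfl hp
    have conv4 : (∑ᶠ p : ℕ × ℕ × ℕ,
          if p.1 < p.2.1 ∧ p.2.1 < p.2.2 then
            a p.1 p.2.1 p.2.2 * (x.2 p.1 : ℝ) * (entryM y p.2.1 p.2.2 : ℝ) else 0)
        = ∑ p ∈ S, (if p.1 < p.2.1 ∧ p.2.1 < p.2.2 then
            a p.1 p.2.1 p.2.2 * (x.2 p.1 : ℝ) * (entryM y p.2.1 p.2.2 : ℝ) else 0) := by
      apply finsum_eq_sum_of_support_subset
      intro p hp
      rw [Function.mem_support] at hp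
      by_cases hcond : p.1 < p.2.1 ∧ p.2.1 < p.2.2
      · rw [if_pos hcond] at hp
        obtain ⟨h1, h2⟩ := hne hp
        rw [Int.cast_ne_zero] at h1 h2
        exact hmemS p (mem_PP_x2 h1) (mem_PP_ey hcond.2 h2).1 (mem_PP_ey hcond.2 h2).2
      · rw [if_neg hcond] at hp
        exact absurd rfl hp
    rw [conv0, conv1, conv2, conv3, conv4,
      ← Finset.sum_sub_distrib, ← Finset.sum_add_distrib, ← Finset.sum_sub_distrib]
    apply Finset.sum_congr rfl
    rintro ⟨i, j, k⟩ _
    dsimp only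
    by_cases hcond : i < j ∧ j < k
    · rw [if_pos hcond, if_pos hcond, if_pos hcond, if_pos hcond, if_pos hcond]
      rw [entryM_Hmul y z hcond.2, Finsupp.add_apply]
      push_cast
      ring
    · rw [if_neg hcond, if_neg hcond, if_neg hcond, if_neg hcond, if_neg hcond]
      ring
end

section
/- Let p_i,p_j,q_i,q_j be positive integers, D(i,j)=gcd(p_i,p_j,q_i,q_j), D_{ij}=gcd(p_i,p_j), E_{ij}=gcd(q_i,q_j), r_{ij}=p_i/D_{ij}, r_{ji}=p_j/D_{ij}, s_{ij}=q_i/E_{ij}, s_{ji}=q_j/E_{ij}, m_{ij}=D_{ij}/D(i,j), n_{ij}=E_{ij}/D(i,j), and choose integers w_{ij},w_{ji},x_{ij},y_{ij} with q_i w_{ij} + q_j w_{ji} = E_{ij} and x_{ij}D_{ij} + y_{ij}E_{ij} = D(i,j). Define Z = {(x,u,y,v) ∈ ℝ⁴: p_j x − q_j u ∈ ℤ and p_i y − q_i v ∈ ℤ} and B = {(x,u,y,v) ∈ Z : p_j x + p_i y ∈ D_{ij}ℤ, u ∈ ℤ, v ∈ ℤ}. Then Z/B ≅ ((1/D(i,j))ℤ)/ℤ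 ⊕ ℝ/ℤ ⊕ ℝ/ℤ, where the class of (x,u,y,v) maps to ([m_{ij}(x r_{ji}+y r_{ij}) − n_{ij}(u s_{ji}+v s_{ij})]_ℤ, [y_{ij}(x r_{ji}+y r_{ij}) + x_{ij}(u s_{ji}+v s_{ij})]_ℤ, [−u w_{ij} + v w_{ji}]_ℤ). -/
/-- `Z = {(x,u,y,v) ∈ ℝ⁴ : p_j x − q_j u ∈ ℤ and p_i y − q_i v ∈ ℤ}` as an additive
subgroup of `ℝ⁴`. -/
def Zb (pi pj qi qj : ℤ) : AddSubgroup (ℝ × ℝ × ℝ × ℝ) where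
  carrier := {z | (∃ k : ℤ, (pj : ℝ) * z.1 - (qj : ℝ) * z.2.1 = (k : ℝ)) ∧
    (∃ l : ℤ, (pi : ℝ) * z.2.2.1 - (qi : ℝ) * z.2.2.2 = (l : ℝ))}
  zero_mem' := ⟨⟨0, by simp⟩, ⟨0, by simp⟩⟩
  add_mem' := by
    rintro a b ⟨⟨k, hk⟩, ⟨l, hl⟩⟩ ⟨⟨k', hk'⟩, ⟨l', hl'⟩⟩
    constructor
    · refine ⟨k + k', ?_⟩
      push_cast
      simp only [Prod.fst_add, Prod.snd_add]
      ring_nf; ring_nf at hk hk'; linarith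
    · refine ⟨l + l', ?_⟩
      push_cast
      simp only [Prod.fst_add, Prod.snd_add]
      ring_nf; ring_nf at hl hl'; linarith
  neg_mem' := by
    rintro a ⟨⟨k, hk⟩, ⟨l, hl⟩⟩
    constructor
    · refine ⟨-k, ?_⟩
      push_cast
      simp only [Prod.fst_neg, Prod.snd_neg]
      linarith
    · refine ⟨-l, ?_⟩
      push_cast
      simp only [Prod.fst_neg, Prod.snd_neg]
      linarith

/-- `B = {(x,u,y,v) ∈ Z : p_j x + p_i y ∈ D_{ij}ℤ, u ∈ ℤ, v ∈ ℤ}` as an additive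
subgroup of `ℝ⁴`. -/
def Bb (pi pj qi qj Dij : ℤ) : AddSubgroup (ℝ × ℝ × ℝ × ℝ) where
  carrier := {z | (∃ k : ℤ, (pj : ℝ) * z.1 - (qj : ℝ) * z.2.1 = (k : ℝ)) ∧
    (∃ l : ℤ, (pi : ℝ) * z.2.2.1 - (qi : ℝ) * z.2.2.2 = (l : ℝ)) ∧
    (∃ d : ℤ, (pj : ℝ) * z.1 + (pi : ℝ) * z.2.2.1 = (Dij : ℝ) * (d : ℝ)) ∧
    (∃ u : ℤ, z.2.1 = (u : ℝ)) ∧ (∃ v : ℤ, z.2.2.2 = (v : ℝ))}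
  zero_mem' := ⟨⟨0, by simp⟩, ⟨0, by simp⟩, ⟨0, by simp⟩, ⟨0, by simp⟩, ⟨0, by simp⟩⟩
  add_mem' := by
    rintro a b ⟨⟨k, hk⟩, ⟨l, hl⟩, ⟨d, hd⟩, ⟨u, hu⟩, ⟨v, hv⟩⟩
      ⟨⟨k', hk'⟩, ⟨l', hl'⟩, ⟨d', hd'⟩, ⟨u', hu'⟩, ⟨v', hv'⟩⟩
    refine ⟨⟨k + k', ?_⟩, ⟨l + l', ?_⟩, ⟨d + d', ?_⟩, ⟨u + u', ?_⟩, ⟨v + v', ?_⟩⟩ <;>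
      (push_cast
       simp only [Prod.fst_add, Prod.snd_add]
       ring_nf
       try ring_nf at hk
       try ring_nf at hk'
       try ring_nf at hl
       try ring_nf at hl'
       try ring_nf at hd
       try ring_nf at hd'
       try ring_nf at hu
       try ring_nf at hu'
       try ring_nf at hv
       try ring_nf at hv'
       linarith)
  neg_mem' := by
    rintro a ⟨⟨k, hk⟩, ⟨l, hl⟩, ⟨d, hd⟩, ⟨u, hu⟩, ⟨v, hv⟩⟩
    refine ⟨⟨-k, ?_⟩, ⟨-l, ?_⟩, ⟨-d, ?_⟩, ⟨-u, ?_⟩, ⟨-v, ?_⟩⟩ <;>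
      (push_cast
       simp only [Prod.fst_neg, Prod.snd_neg]
       ring_nf
       try ring_nf at hk
       try ring_nf at hl
       try ring_nf at hd
       try ring_nf at hu
       try ring_nf at hv
       linarith)

/-- With `D(i,j) = gcd(p_i,p_j,q_i,q_j)`, `D_{ij} = gcd(p_i,p_j)`, `E_{ij} = gcd(q_i,q_j)`,
`p_i = D_{ij} r_{ij}`, `p_j = D_{ij} r_{ji}`, `q_i = E_{ij} s_{ij}`, `q_j = E_{ij} s_{ji}`,
`D_{ij} = D(i,j)·m_{ij}`, `E_{ij} = D(i,j)·n_{ij}`, `q_i w_{ij} + q_j w_{ji} = E_{ij}`,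
`x_{ij}D_{ij} + y_{ij}E_{ij} = D(i,j)`: the quotient `Z/B` is isomorphic to
`((1/D(i,j))ℤ)/ℤ ⊕ ℝ/ℤ ⊕ ℝ/ℤ ≅ ℤ/D(i,j)ℤ ⊕ ℝ/ℤ ⊕ ℝ/ℤ`, the class of `(x,u,y,v)` (with
`p_j x − q_j u = k`, `p_i y − q_i v = l`) mapping to
`([m_{ij}(x r_{ji}+y r_{ij}) − n_{ij}(u s_{ji}+v s_{ij})] = k + l mod D(i,j)`,
`[y_{ij}(x r_{ji}+y r_{ij}) + x_{ij}(u s_{ji}+v s_{ij})]`, `[−u w_{ij} + v w_{ji}]`). -/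
theorem stmt_18 (pi pj qi qj rij rji sij sji wij wji xij yij mij nij : ℤ)
    (Dij Eij Dbig : ℕ)
    (hpi : 0 < pi) (hpj : 0 < pj) (hqi : 0 < qi) (hqj : 0 < qj)
    (hDij : (Dij : ℤ) = Int.gcd pi pj) (hEij : (Eij : ℤ) = Int.gcd qi qj)
    (hDbig : (Dbig : ℤ) = Int.gcd (Int.gcd pi pj : ℤ) (Int.gcd qi qj : ℤ))
    (hrij : pi = (Dij : ℤ) * rij) (hrji : pj = (Dij : ℤ) * rji)
    (hsij : qi = (Eij : ℤ) * sij) (hsji : qj = (Eij : ℤ) * sji)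
    (hmij : (Dij : ℤ) = (Dbig : ℤ) * mij) (hnij : (Eij : ℤ) = (Dbig : ℤ) * nij)
    (hw : qi * wij + qj * wji = (Eij : ℤ))
    (hxy : xij * (Dij : ℤ) + yij * (Eij : ℤ) = (Dbig : ℤ)) :
    ∃ e : (↥(Zb pi pj qi qj) ⧸ ((Bb pi pj qi qj (Dij : ℤ)).addSubgroupOf
        (Zb pi pj qi qj))) ≃+ ZMod Dbig × AddCircle (1 : ℝ) × AddCircle (1 : ℝ),
      ∀ (x u y v : ℝ) (hz : (x, u, y, v) ∈ Zb pi pj qi qj) (k l : ℤ),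
        (pj : ℝ) * x - (qj : ℝ) * u = (k : ℝ) →
        (pi : ℝ) * y - (qi : ℝ) * v = (l : ℝ) →
        e (QuotientAddGroup.mk ⟨(x, u, y, v), hz⟩) =
          (((k + l : ℤ) : ZMod Dbig),
           (((yij : ℝ) * (x * (rji : ℝ) + y * (rij : ℝ))
              + (xij : ℝ) * (u * (sji : ℝ) + v * (sij : ℝ)) : ℝ) : AddCircle (1 : ℝ)),
           ((-(wij : ℝ) * u + (wji : ℝ) * v : ℝ) : AddCircle (1 : ℝ))) := by
  classical
  -- basic nonvanishing facts
  have hDijZ : (Dij : ℤ) ≠ 0 := by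
    intro h; rw [h, zero_mul] at hrij; omega
  have hEijZ : (Eij : ℤ) ≠ 0 := by
    intro h; rw [h, zero_mul] at hsij; omega
  have hDbigZ : (Dbig : ℤ) ≠ 0 := by
    intro h; rw [h, zero_mul] at hmij; exact hDijZ hmij
  have hDbigN : Dbig ≠ 0 := fun h => hDbigZ (by exact_mod_cast congrArg (Nat.cast : ℕ → ℤ) h)
  haveI : NeZero Dbig := ⟨hDbigN⟩
  have hDijR : (Dij : ℝ) ≠ 0 := by exact_mod_cast hDijZ
  have hEijR : (Eij : ℝ) ≠ 0 := by exact_mod_cast hEijZ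
  have hDbigR : (Dbig : ℝ) ≠ 0 := by exact_mod_cast hDbigZ
  have hrjiZ : rji ≠ 0 := by intro h; rw [h, mul_zero] at hrji; omega
  have hrjiR : (rji : ℝ) ≠ 0 := by exact_mod_cast hrjiZ
  have hpiR : (pi : ℝ) ≠ 0 := by exact_mod_cast (by omega : pi ≠ 0)
  -- real versions of integer identities
  have hPi : (pi : ℝ) = (Dij : ℝ) * rij := by exact_mod_cast congrArg (Int.cast : ℤ → ℝ) hrij
  have hPj : (pj : ℝ) = (Dij : ℝ) * rji := by exact_mod_cast congrArg (Int.cast : ℤ → ℝ) hrji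
  have hQi : (qi : ℝ) = (Eij : ℝ) * sij := by exact_mod_cast congrArg (Int.cast : ℤ → ℝ) hsij
  have hQj : (qj : ℝ) = (Eij : ℝ) * sji := by exact_mod_cast congrArg (Int.cast : ℤ → ℝ) hsji
  have hM : (Dij : ℝ) = (Dbig : ℝ) * mij := by exact_mod_cast congrArg (Int.cast : ℤ → ℝ) hmij
  have hN : (Eij : ℝ) = (Dbig : ℝ) * nij := by exact_mod_cast congrArg (Int.cast : ℤ → ℝ) hnij
  have hW : (qi : ℝ) * wij + (qj : ℝ) * wji = (Eij : ℝ) := by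
    exact_mod_cast congrArg (Int.cast : ℤ → ℝ) hw
  have hXY : (xij : ℝ) * Dij + (yij : ℝ) * Eij = (Dbig : ℝ) := by
    exact_mod_cast congrArg (Int.cast : ℤ → ℝ) hxy
  have hunit : (sji : ℝ) * wji + (sij : ℝ) * wij = 1 := by
    have h2 : (Eij : ℝ) * ((sji : ℝ) * wji + (sij : ℝ) * wij) = (Eij : ℝ) * 1 := by
      rw [mul_one]; linear_combination hW - (wij : ℝ) * hQi - (wji : ℝ) * hQj
    exact mul_left_cancel₀ hEijR h2
  have hintcoe : ∀ n : ℤ, (((n : ℝ)) : AddCircle (1 : ℝ)) = 0 := by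
    intro n
    rw [AddCircle.coe_eq_zero_iff]
    exact ⟨n, by simp⟩
  -- the homomorphism
  set F : ↥(Zb pi pj qi qj) → ZMod Dbig × AddCircle (1 : ℝ) × AddCircle (1 : ℝ) :=
    fun z =>
      (((⌊(pj : ℝ) * z.1.1 - (qj : ℝ) * z.1.2.1⌋
          + ⌊(pi : ℝ) * z.1.2.2.1 - (qi : ℝ) * z.1.2.2.2⌋ : ℤ) : ZMod Dbig),
       (((yij : ℝ) * (z.1.1 * (rji : ℝ) + z.1.2.2.1 * (rij : ℝ))
          + (xij : ℝ) * (z.1.2.1 * (sji : ℝ) + z.1.2.2.2 * (sij : ℝ)) : ℝ) : AddCircle (1 : ℝ)),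
       ((-(wij : ℝ) * z.1.2.1 + (wji : ℝ) * z.1.2.2.2 : ℝ) : AddCircle (1 : ℝ))) with hF
  have hadd : ∀ a b : ↥(Zb pi pj qi qj), F (a + b) = F a + F b := by
    rintro ⟨⟨xa, ua, ya, va⟩, ⟨ka, hka⟩, ⟨la, hla⟩⟩ ⟨⟨xb, ub, yb, vb⟩, ⟨kb, hkb⟩, ⟨lb, hlb⟩⟩
    have e1 : (pj : ℝ) * (xa + xb) - (qj : ℝ) * (ua + ub) = ((ka + kb : ℤ) : ℝ) := by
      push_cast; linarith
    have e2 : (pi : ℝ) * (ya + yb) - (qi : ℝ) * (va + vb) = ((la + lb : ℤ) : ℝ) := by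
      push_cast; linarith
    simp only [hF, AddSubgroup.coe_add, Prod.fst_add, Prod.snd_add, Prod.mk_add_mk]
    refine Prod.ext ?_ (Prod.ext ?_ ?_)
    · show (((⌊(pj : ℝ) * (xa + xb) - (qj : ℝ) * (ua + ub)⌋
        + ⌊(pi : ℝ) * (ya + yb) - (qi : ℝ) * (va + vb)⌋ : ℤ)) : ZMod Dbig) = _
      rw [e1, e2, hka, hkb, hla, hlb]
      simp only [Int.floor_intCast]
      push_cast
      ring
    · show _ = ((_ : ℝ) : AddCircle (1:ℝ)) + ((_ : ℝ) : AddCircle (1:ℝ))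
      rw [← AddCircle.coe_add]
      congr 1
      ring
    · show _ = ((_ : ℝ) : AddCircle (1:ℝ)) + ((_ : ℝ) : AddCircle (1:ℝ))
      rw [← AddCircle.coe_add]
      congr 1
      ring
  let φ : ↥(Zb pi pj qi qj) →+ ZMod Dbig × AddCircle (1 : ℝ) × AddCircle (1 : ℝ) :=
    AddMonoidHom.mk' F hadd
  have hfwd : ∀ z : ↥(Zb pi pj qi qj),
      z ∈ (Bb pi pj qi qj (Dij : ℤ)).addSubgroupOf (Zb pi pj qi qj) → F z = 0 := by
    rintro ⟨⟨x, u, y, v⟩, hzZ⟩ hmem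
    rw [AddSubgroup.mem_addSubgroupOf] at hmem
    obtain ⟨⟨k, hk0⟩, ⟨l, hl0⟩, ⟨d, hd0⟩, ⟨u0, hu0⟩, ⟨v0, hv0⟩⟩ := hmem
    have hk : (pj : ℝ) * x - (qj : ℝ) * u = (k : ℝ) := hk0
    have hl : (pi : ℝ) * y - (qi : ℝ) * v = (l : ℝ) := hl0
    have hd : (pj : ℝ) * x + (pi : ℝ) * y = (Dij : ℝ) * d := hd0
    have hu : u = (u0 : ℝ) := hu0
    have hv : v = (v0 : ℝ) := hv0
    rw [hu] at hk
    rw [hv] at hl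
    have hA : x * (rji : ℝ) + y * (rij : ℝ) = (d : ℝ) := by
      refine mul_left_cancel₀ hDijR ?_
      linear_combination hd - x * hPj - y * hPi
    simp only [hF]
    refine Prod.ext ?_ (Prod.ext ?_ ?_)
    · show (((⌊(pj : ℝ) * x - (qj : ℝ) * u⌋
        + ⌊(pi : ℝ) * y - (qi : ℝ) * v⌋ : ℤ)) : ZMod Dbig) = 0
      rw [hu, hv, hk, hl, Int.floor_intCast, Int.floor_intCast,
        ZMod.intCast_zmod_eq_zero_iff_dvd]
      refine ⟨mij * d - nij * sji * u0 - nij * sij * v0, ?_⟩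
      have hcast : ((k + l : ℤ) : ℝ)
          = (((Dbig : ℤ) * (mij * d - nij * sji * u0 - nij * sij * v0) : ℤ) : ℝ) := by
        push_cast
        linear_combination -hk - hl + hd + d * hM - u0 * hQj - (u0 : ℝ) * sji * hN
          - v0 * hQi - (v0 : ℝ) * sij * hN
      exact_mod_cast hcast
    · show (((yij : ℝ) * (x * (rji : ℝ) + y * (rij : ℝ))
        + (xij : ℝ) * (u * (sji : ℝ) + v * (sij : ℝ)) : ℝ) : AddCircle (1:ℝ)) = 0
      have : (yij : ℝ) * (x * (rji : ℝ) + y * (rij : ℝ))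
          + (xij : ℝ) * (u * (sji : ℝ) + v * (sij : ℝ))
          = ((yij * d + xij * (sji * u0 + sij * v0) : ℤ) : ℝ) := by
        push_cast
        rw [hu, hv, hA]
        ring
      rw [this]
      exact hintcoe _
    · show ((-(wij : ℝ) * u + (wji : ℝ) * v : ℝ) : AddCircle (1:ℝ)) = 0
      have : -(wij : ℝ) * u + (wji : ℝ) * v = ((-wij * u0 + wji * v0 : ℤ) : ℝ) := by
        push_cast
        rw [hu, hv]
      rw [this]
      exact hintcoe _
  have hbwd : ∀ z : ↥(Zb pi pj qi qj),
      F z = 0 → z ∈ (Bb pi pj qi qj (Dij : ℤ)).addSubgroupOf (Zb pi pj qi qj) := by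
    rintro ⟨⟨x, u, y, v⟩, ⟨k, hk0⟩, ⟨l, hl0⟩⟩ h0
    simp only [hF, Prod.ext_iff, Prod.fst_zero, Prod.snd_zero] at h0
    obtain ⟨h1, h2, h3⟩ := h0
    have hk : (pj : ℝ) * x - (qj : ℝ) * u = (k : ℝ) := hk0
    have hl : (pi : ℝ) * y - (qi : ℝ) * v = (l : ℝ) := hl0
    have h1' : ((⌊(pj : ℝ) * x - (qj : ℝ) * u⌋
        + ⌊(pi : ℝ) * y - (qi : ℝ) * v⌋ : ℤ) : ZMod Dbig) = 0 := h1
    have h2' : (((yij : ℝ) * (x * (rji : ℝ) + y * (rij : ℝ))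
        + (xij : ℝ) * (u * (sji : ℝ) + v * (sij : ℝ)) : ℝ) : AddCircle (1 : ℝ)) = 0 := h2
    have h3' : ((-(wij : ℝ) * u + (wji : ℝ) * v : ℝ) : AddCircle (1 : ℝ)) = 0 := h3
    rw [hk, hl, Int.floor_intCast, Int.floor_intCast,
      ZMod.intCast_zmod_eq_zero_iff_dvd] at h1'
    obtain ⟨t, ht⟩ := h1'
    rw [AddCircle.coe_eq_zero_iff] at h2' h3'
    obtain ⟨c, hc⟩ := h2'
    obtain ⟨w, hw3⟩ := h3'
    rw [zsmul_eq_mul, mul_one] at hc hw3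
    have htR : (k : ℝ) + l = (Dbig : ℝ) * t := by exact_mod_cast congrArg (Int.cast : ℤ → ℝ) ht
    have e1 : (Dij : ℝ) * (x * rji + y * rij) - (Eij : ℝ) * (u * sji + v * sij)
        = (Dbig : ℝ) * t := by
      linear_combination hk + hl + htR - x * hPj - y * hPi + u * hQj + v * hQi
    have e2 : (yij : ℝ) * (x * rji + y * rij) + (xij : ℝ) * (u * sji + v * sij) = (c : ℝ) :=
      hc.symm
    have hA : x * (rji : ℝ) + y * (rij : ℝ) = (xij : ℝ) * t + (nij : ℝ) * c := by
      refine mul_left_cancel₀ hDbigR ?_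
      linear_combination (xij : ℝ) * e1 + (Eij : ℝ) * e2
        - (x * (rji : ℝ) + y * (rij : ℝ)) * hXY + (c : ℝ) * hN
    have hB : u * (sji : ℝ) + v * (sij : ℝ) = (mij : ℝ) * c - (yij : ℝ) * t := by
      refine mul_left_cancel₀ hDbigR ?_
      linear_combination (Dij : ℝ) * e2 - (yij : ℝ) * e1
        - (u * (sji : ℝ) + v * (sij : ℝ)) * hXY + (c : ℝ) * hM
    have hw3' : -(wij : ℝ) * u + (wji : ℝ) * v = (w : ℝ) := hw3.symm
    rw [AddSubgroup.mem_addSubgroupOf]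
    refine ⟨⟨k, hk⟩, ⟨l, hl⟩, ⟨xij * t + nij * c, ?_⟩,
      ⟨wji * (mij * c - yij * t) - sij * w, ?_⟩,
      ⟨wij * (mij * c - yij * t) + sji * w, ?_⟩⟩
    · push_cast
      linear_combination x * hPj + y * hPi + (Dij : ℝ) * hA
    · push_cast
      linear_combination (wji : ℝ) * hB - (sij : ℝ) * hw3' - u * hunit
    · push_cast
      linear_combination (wij : ℝ) * hB + (sji : ℝ) * hw3' - v * hunit
  have hsurjF : Function.Surjective F := by
    rintro ⟨a, bb, cc⟩
    obtain ⟨t, rfl⟩ := ZMod.intCast_surjective a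
    obtain ⟨β, rfl⟩ := QuotientAddGroup.mk_surjective bb
    obtain ⟨γ, rfl⟩ := QuotientAddGroup.mk_surjective cc
    set A : ℝ := ((xij : ℝ) * t + (Eij : ℝ) * β) / Dbig with hA
    set Bp : ℝ := ((Dij : ℝ) * β - (yij : ℝ) * t) / Dbig with hBp
    set uu : ℝ := (wji : ℝ) * Bp - (sij : ℝ) * γ with huu
    set vv : ℝ := (wij : ℝ) * Bp + (sji : ℝ) * γ with hvv
    set yy : ℝ := ((qi : ℝ) * vv) / pi with hyy
    set xx : ℝ := (A - yy * rij) / rji with hxx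
    have hyyl : (pi : ℝ) * yy = (qi : ℝ) * vv := by rw [hyy]; field_simp
    have hxxA : (rji : ℝ) * xx = A - yy * rij := by rw [hxx]; field_simp
    have hBsum : uu * (sji : ℝ) + vv * (sij : ℝ) = Bp := by
      rw [huu, hvv]; linear_combination Bp * hunit
    have hgam : -(wij : ℝ) * uu + (wji : ℝ) * vv = γ := by
      rw [huu, hvv]; linear_combination γ * hunit
    have hDt : (Dij : ℝ) * A - (Eij : ℝ) * Bp = (t : ℝ) := by
      rw [hA, hBp]; field_simp; linear_combination (t : ℝ) * hXY
    have hAval : xx * (rji : ℝ) + yy * (rij : ℝ) = A := by linear_combination hxxA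
    have hBval2 : (yij : ℝ) * A + (xij : ℝ) * Bp = β := by
      rw [hA, hBp]; field_simp; linear_combination β * hXY
    have el : (pi : ℝ) * yy - (qi : ℝ) * vv = ((0 : ℤ) : ℝ) := by
      push_cast; linarith [hyyl]
    have ek : (pj : ℝ) * xx - (qj : ℝ) * uu = ((t : ℤ) : ℝ) := by
      push_cast
      linear_combination xx * hPj + (Dij : ℝ) * hxxA + yy * hPi - hyyl - vv * hQi
        - uu * hQj - (Eij : ℝ) * hBsum + hDt
    refine ⟨⟨(xx, uu, yy, vv), ⟨t, ek⟩, ⟨0, el⟩⟩, ?_⟩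
    simp only [hF]
    refine Prod.ext ?_ (Prod.ext ?_ ?_)
    · show (((⌊(pj : ℝ) * xx - (qj : ℝ) * uu⌋
        + ⌊(pi : ℝ) * yy - (qi : ℝ) * vv⌋ : ℤ)) : ZMod Dbig) = ((t : ℤ) : ZMod Dbig)
      rw [ek, el, Int.floor_intCast, Int.floor_intCast]
      simp
    · show (((yij : ℝ) * (xx * (rji : ℝ) + yy * (rij : ℝ))
        + (xij : ℝ) * (uu * (sji : ℝ) + vv * (sij : ℝ)) : ℝ) : AddCircle (1:ℝ))
        = ((β : ℝ) : AddCircle (1:ℝ))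
      refine congrArg _ ?_
      linear_combination (yij : ℝ) * hAval + (xij : ℝ) * hBsum + hBval2
    · show ((-(wij : ℝ) * uu + (wji : ℝ) * vv : ℝ) : AddCircle (1:ℝ))
        = ((γ : ℝ) : AddCircle (1:ℝ))
      exact congrArg _ hgam
  have hle : (Bb pi pj qi qj (Dij : ℤ)).addSubgroupOf (Zb pi pj qi qj) ≤ φ.ker :=
    fun z hz => hfwd z hz
  let e0 := QuotientAddGroup.lift _ φ hle
  have he0mk : ∀ z : ↥(Zb pi pj qi qj), e0 (QuotientAddGroup.mk z) = F z := fun z => rfl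
  have hinj : Function.Injective e0 := by
    rw [injective_iff_map_eq_zero]
    intro q hq
    induction q using QuotientAddGroup.induction_on with
    | H z =>
      rw [he0mk] at hq
      exact (QuotientAddGroup.eq_zero_iff z).mpr (hbwd z hq)
  have hsurj : Function.Surjective e0 := by
    intro c
    obtain ⟨z, hz⟩ := hsurjF c
    exact ⟨QuotientAddGroup.mk z, by rw [he0mk]; exact hz⟩
  refine ⟨AddEquiv.ofBijective e0 ⟨hinj, hsurj⟩, ?_⟩
  intro x u y v hz k l hk hl
  show e0 (QuotientAddGroup.mk ⟨(x, u, y, v), hz⟩) = _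
  rw [he0mk]
  simp only [hF]
  show (((⌊(pj : ℝ) * x - (qj : ℝ) * u⌋ + ⌊(pi : ℝ) * y - (qi : ℝ) * v⌋ : ℤ) : ZMod Dbig),
    (((yij : ℝ) * (x * (rji : ℝ) + y * (rij : ℝ))
      + (xij : ℝ) * (u * (sji : ℝ) + v * (sij : ℝ)) : ℝ) : AddCircle (1 : ℝ)),
    ((-(wij : ℝ) * u + (wji : ℝ) * v : ℝ) : AddCircle (1 : ℝ))) = _
  rw [hk, hl, Int.floor_intCast, Int.floor_intCast]
end
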